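/- arXiv:2511.21162 — 6 statements merged into one kernel-verified Lean document; each statement's English description precedes it below -/
import Mathlib

section
/- Let ρ ∈ (1,∞) and consider prices p ∈ R^2 with p1, p2 ≥ 0, p1 + p2 ≥ 1, and (p1,p2) ≠ (1/2,1/2). Then (2p1 - 1) p1^{1/(ρ-1)} + (2p2 - 1) p2^{1/(ρ-1)} > 0. Equivalently, 2 > (p1^{1/(ρ-1)} + p2^{1/(ρ-1)}) / (p1^{ρ/(ρ-1)} + p2^{ρ/(ρ-1)}). -/
lemma ces_aux (t p1 p2 : ℝ) (ht : 0 < t)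
    (hp2 : 0 ≤ p2) (hsum : 1 ≤ p1 + p2) (h2 : p2 ≤ 1/2)
    (hne : ¬ (p1 = 1/2 ∧ p2 = 1/2)) :
    0 < (2*p1 - 1) * p1 ^ t + (2*p2 - 1) * p2 ^ t := by
  have hp1half : 1/2 ≤ p1 := by linarith
  have hp1pos : 0 < p1 := by linarith
  rcases eq_or_lt_of_le hsum with heq | hlt
  · have hp2lt : p2 < 1/2 := by
      rcases lt_or_eq_of_le h2 with h | h
      · exact h
      · exact absurd ⟨by linarith, h⟩ hne
    have hlt' : p2 < p1 := by linarith
    have hrpow : p2 ^ t < p1 ^ t := Real.rpow_lt_rpow hp2 hlt' ht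
    have h1 : 2*p1 - 1 = 1 - 2*p2 := by linarith
    nlinarith [hrpow, Real.rpow_nonneg hp2 t]
  · have ha : (0:ℝ) < p1 ^ t := Real.rpow_pos_of_pos hp1pos t
    have hab : p2 ^ t ≤ p1 ^ t := Real.rpow_le_rpow hp2 (by linarith) ht.le
    nlinarith [Real.rpow_nonneg hp2 t]

/-- For `ρ ∈ (1,∞)` and prices `p1, p2 ≥ 0` with `p1 + p2 ≥ 1` and
`(p1,p2) ≠ (1/2,1/2)`, we have `(2p1-1)p1^{1/(ρ-1)} + (2p2-1)p2^{1/(ρ-1)} > 0`,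
equivalently `(p1^{1/(ρ-1)} + p2^{1/(ρ-1)})/(p1^{ρ/(ρ-1)} + p2^{ρ/(ρ-1)}) < 2`. -/
theorem ces_price_sum_increases
    (ρ p1 p2 : ℝ) (hρ : 1 < ρ)
    (hp1 : 0 ≤ p1) (hp2 : 0 ≤ p2) (hsum : 1 ≤ p1 + p2)
    (hne : ¬ (p1 = 1/2 ∧ p2 = 1/2)) :
    0 < (2*p1 - 1) * p1 ^ (1/(ρ-1)) + (2*p2 - 1) * p2 ^ (1/(ρ-1)) ∧
    (p1 ^ (1/(ρ-1)) + p2 ^ (1/(ρ-1))) / (p1 ^ (ρ/(ρ-1)) + p2 ^ (ρ/(ρ-1))) < 2 := by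
  set t := 1/(ρ-1) with ht_def
  have hρ1 : (0:ℝ) < ρ - 1 := by linarith
  have ht : 0 < t := by positivity
  have key : 0 < (2*p1 - 1) * p1 ^ t + (2*p2 - 1) * p2 ^ t := by
    rcases le_or_gt p2 (1/2) with h | h
    · exact ces_aux t p1 p2 ht hp2 hsum h hne
    · rcases le_or_gt p1 (1/2) with h' | h'
      · have := ces_aux t p2 p1 ht hp1 (by linarith) h'
          (fun ⟨a, b⟩ => hne ⟨b, a⟩)
        linarith
      · have a1 : (0:ℝ) < p1 ^ t := Real.rpow_pos_of_pos (by linarith) t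
        have a2 : (0:ℝ) < p2 ^ t := Real.rpow_pos_of_pos (by linarith) t
        nlinarith
  refine ⟨key, ?_⟩
  have hexp : ρ/(ρ-1) = 1 + t := by
    rw [ht_def]; field_simp; ring
  have e1 : p1 ^ (ρ/(ρ-1)) = p1 * p1 ^ t := by
    rw [hexp, Real.rpow_add' hp1 (by positivity), Real.rpow_one]
  have e2 : p2 ^ (ρ/(ρ-1)) = p2 * p2 ^ t := by
    rw [hexp, Real.rpow_add' hp2 (by positivity), Real.rpow_one]
  rw [e1, e2]
  have hD : 0 < p1 * p1 ^ t + p2 * p2 ^ t := by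
    rcases le_or_gt (1/2) p1 with h | h
    · have : (0:ℝ) < p1 * p1 ^ t := by
        have := Real.rpow_pos_of_pos (show (0:ℝ) < p1 by linarith) t
        positivity
      nlinarith [mul_nonneg hp2 (Real.rpow_nonneg hp2 t)]
    · have hp2' : (0:ℝ) < p2 := by linarith
      have : (0:ℝ) < p2 * p2 ^ t := by
        have := Real.rpow_pos_of_pos hp2' t
        positivity
      nlinarith [mul_nonneg hp1 (Real.rpow_nonneg hp1 t)]
  rw [div_lt_iff₀ hD]
  linarith
end

section
/- In a chores Fisher market with CCH strictly increasing disutilities, any absolutely continuous trajectory p(t) of the relative tâtonnement dynamics dp/dt ∈ -Z̃(p) with initial point p(0) ∈ Δ_B = H_B ∩ R^m_+ satisfies p(t) ∈ Δ_B for all t ≥ 0. In particular, Σ_j p_j(t) = ‖B‖_1 for all t, and no coordinate ever becomes negative. -/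
open Finset

/-- Agent demand: disutility-minimizing bundles subject to earning at least `Bi`. -/
def demandSet (m : ℕ) (d : (Fin m → ℝ) → ℝ) (Bi : ℝ) (p : Fin m → ℝ) :
    Set (Fin m → ℝ) :=
  {x | (∀ j, 0 ≤ x j) ∧ Bi ≤ ∑ j, p j * x j ∧
    ∀ y : Fin m → ℝ, (∀ j, 0 ≤ y j) → Bi ≤ ∑ j, p j * y j → d x ≤ d y}

/-- Excess demand correspondence `Z(p) = { Σ_i x_i - 1_m : x_i ∈ X_i(p) }`. -/
def excessDemand (n m : ℕ) (d : Fin n → (Fin m → ℝ) → ℝ) (B : Fin n → ℝ)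
    (p : Fin m → ℝ) : Set (Fin m → ℝ) :=
  {z | ∃ x : Fin n → Fin m → ℝ, (∀ i, x i ∈ demandSet m (d i) (B i) p) ∧
    z = fun j => (∑ i, x i j) - 1}

/-- Relative excess demand `Z̃(p) = { z - (1/m)(Σ_j z_j)·1_m : z ∈ Z(p) }`. -/
def relExcessDemand (n m : ℕ) (d : Fin n → (Fin m → ℝ) → ℝ) (B : Fin n → ℝ)
    (p : Fin m → ℝ) : Set (Fin m → ℝ) :=
  {zt | ∃ z ∈ excessDemand n m d B p, zt = fun j => z j - (∑ j', z j') / m}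

/-- If `p j ≤ 0` then any demand bundle has `x j = 0`. -/
lemma demand_coord_zero (m : ℕ) (d : (Fin m → ℝ) → ℝ) (Bi : ℝ) (p : Fin m → ℝ)
    (hmono : ∀ (y z : Fin m → ℝ), (∀ j, 0 ≤ y j) → (∀ j, y j ≤ z j) → y ≠ z → d y < d z)
    (x : Fin m → ℝ) (hx : x ∈ demandSet m d Bi p) (j : Fin m) (hpj : p j ≤ 0) :
    x j = 0 := by
  obtain ⟨hnn, hbud, hmin⟩ := hx
  by_contra h
  have hxj : 0 < x j := lt_of_le_of_ne (hnn j) (Ne.symm h)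
  set y := Function.update x j 0 with hy
  have hynn : ∀ k, 0 ≤ y k := by
    intro k; by_cases hk : k = j
    · subst hk; simp [hy]
    · simp only [hy, Function.update_of_ne hk]; exact hnn k
  have hsum : ∑ k, p k * y k = (∑ k, p k * x k) - p j * x j := by
    have hterm : ∀ k : Fin m, p k * y k = p k * x k - (if k = j then p j * x j else 0) := by
      intro k; by_cases hk : k = j
      · subst hk; simp [hy]
      · simp [hy, Function.update_of_ne hk, hk]
    simp only [hterm, Finset.sum_sub_distrib, Finset.sum_ite_eq' Finset.univ j,
      Finset.mem_univ, if_true]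
  have hbudy : Bi ≤ ∑ k, p k * y k := by
    rw [hsum]; nlinarith [mul_nonpos_of_nonpos_of_nonneg hpj hxj.le]
  have h1 : d x ≤ d y := hmin y hynn hbudy
  have h2 : d y < d x := by
    apply hmono y x hynn
    · intro k; by_cases hk : k = j
      · rw [hk]; simpa [hy] using hnn j
      · simp [hy, Function.update_of_ne hk]
    · intro he
      have := congrFun he j
      simp [hy] at this
      exact h this.symm
  linarith

/-- Key structural properties of relative excess demand. -/
lemma relED_props (n m : ℕ) (hn : 0 < n) (hm : 0 < m)
    (B : Fin n → ℝ) (hB : ∀ i, 0 < B i)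
    (d : Fin n → (Fin m → ℝ) → ℝ)
    (hmono : ∀ i (x y : Fin m → ℝ), (∀ j, 0 ≤ x j) → (∀ j, x j ≤ y j) → x ≠ y →
      d i x < d i y)
    (p zt : Fin m → ℝ) (hzt : zt ∈ relExcessDemand n m d B p) :
    (∑ j, zt j = 0) ∧ ∀ j, p j ≤ 0 → zt j < 0 := by
  obtain ⟨z, ⟨x, hx, hz⟩, hztdef⟩ := hzt
  have hmR : (0:ℝ) < m := by exact_mod_cast hm
  set S := ∑ j', z j' with hS
  constructor
  · rw [hztdef]
    have : ∑ j : Fin m, (z j - S / m) = S - m * (S / m) := by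
      rw [Finset.sum_sub_distrib, Finset.sum_const, Finset.card_univ, Fintype.card_fin,
        nsmul_eq_mul]
    rw [this]; field_simp; ring
  · intro j hpj
    -- each agent's demand at coord j is zero
    have hxj : ∀ i, x i j = 0 := fun i =>
      demand_coord_zero m (d i) (B i) p (hmono i) (x i) (hx i) j hpj
    have hzj : z j = -1 := by rw [hz]; simp [hxj]
    -- total demand is positive
    have hT : ∀ i, 0 < ∑ k, x i k := by
      intro i
      obtain ⟨hnn, hbud, _⟩ := hx i
      by_contra hle
      push_neg at hle
      have hz0 : ∀ k, x i k = 0 := by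
        intro k
        have h1 : ∑ k, x i k = 0 :=
          le_antisymm hle (Finset.sum_nonneg fun k _ => hnn k)
        have := (Finset.sum_eq_zero_iff_of_nonneg (fun k _ => hnn k)).1 h1
        exact this k (Finset.mem_univ k)
      have : (∑ k, p k * x i k) = 0 := by simp [hz0]
      rw [this] at hbud
      exact absurd hbud (not_le.2 (hB i))
    have hSgt : -(m:ℝ) < S := by
      have hSz : S = (∑ i, ∑ k, x i k) - m := by
        rw [hS]
        have hswap : ∑ j' : Fin m, ∑ i, x i j' = ∑ i, ∑ k, x i k := Finset.sum_comm
        simp only [hz, Finset.sum_sub_distrib, Finset.sum_const, Finset.card_univ,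
          Fintype.card_fin, nsmul_eq_mul, mul_one]
        rw [hswap]
      have hTpos : 0 < ∑ i, ∑ k, x i k := by
        apply Finset.sum_pos (fun i _ => hT i)
        exact ⟨⟨0, hn⟩, Finset.mem_univ _⟩
      rw [hSz]; linarith
    have hdiv : (-1:ℝ) < S / m := (lt_div_iff₀ hmR).2 (by linarith)
    rw [hztdef]
    have hfin : z j - S / (m:ℝ) < 0 := by rw [hzj]; linarith
    exact hfin

open MeasureTheory in
/-- In a chores Fisher market with CCH, strictly increasing disutilities,
any absolutely continuous trajectory `P(t)` of the relative tâtonnement dynamics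
`dP/dt ∈ -Z̃(P)` starting from `P(0) ∈ Δ_B = H_B ∩ ℝ^m₊` stays in `Δ_B` for all `t ≥ 0`:
all coordinates remain nonnegative and `Σ_j P_j(t) = ‖B‖₁`. -/
theorem relative_tatonnement_stays_in_simplex
    (n m : ℕ) (hn : 0 < n) (hm : 0 < m)
    (B : Fin n → ℝ) (hB : ∀ i, 0 < B i)
    (d : Fin n → (Fin m → ℝ) → ℝ)
    (hcont : ∀ i, Continuous (d i))
    (hconv : ∀ i, ConvexOn ℝ {x : Fin m → ℝ | ∀ j, 0 ≤ x j} (d i))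
    (hhom : ∀ i (c : ℝ), 0 < c → ∀ x : Fin m → ℝ, d i (c • x) = c * d i x)
    (hmono : ∀ i (x y : Fin m → ℝ), (∀ j, 0 ≤ x j) → (∀ j, x j ≤ y j) → x ≠ y →
      d i x < d i y)
    (P v : ℝ → Fin m → ℝ)
    (hvint : ∀ j, LocallyIntegrableOn (fun s => v s j) (Set.Ici (0:ℝ)))
    (habs : ∀ j, ∀ t : ℝ, 0 ≤ t → P t j = P 0 j + ∫ s in (0:ℝ)..t, v s j)
    (hincl : ∀ᵐ t ∂(volume.restrict (Set.Ici (0:ℝ))),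
      (fun j => -(v t j)) ∈ relExcessDemand n m d B (P t))
    (hp0nonneg : ∀ j, 0 ≤ P 0 j) (hp0sum : (∑ j, P 0 j) = ∑ i, B i) :
    ∀ t : ℝ, 0 ≤ t → (∀ j, 0 ≤ P t j) ∧ (∑ j, P t j) = ∑ i, B i := by
  -- a.e. structural properties of the velocity
  have hQ : ∀ᵐ t ∂(volume.restrict (Set.Ici (0:ℝ))),
      (∑ j, v t j = 0) ∧ ∀ j, P t j ≤ 0 → 0 < v t j := by
    filter_upwards [hincl] with t ht
    obtain ⟨hsum, hneg⟩ := relED_props n m hn hm B hB d hmono (P t) _ ht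
    constructor
    · have h0 : ∑ j, -(v t j) = 0 := hsum
      rw [Finset.sum_neg_distrib] at h0
      linarith
    · intro j hj
      have := hneg j hj
      simpa using this
  -- interval integrability on [0,∞)
  have hii : ∀ j (a b : ℝ), 0 ≤ a → 0 ≤ b →
      IntervalIntegrable (fun s => v s j) volume a b := by
    intro j a b ha hb
    apply MeasureTheory.IntegrableOn.intervalIntegrable
    apply (hvint j).integrableOn_compact_subset ?_ isCompact_uIcc
    intro s hs
    rcases le_total a b with h | h
    · rw [Set.uIcc_of_le h] at hs; exact le_trans ha hs.1
    · rw [Set.uIcc_of_ge h] at hs; exact le_trans hb hs.1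
  -- sum invariance
  have hsumP : ∀ t, 0 ≤ t → (∑ j, P t j) = ∑ i, B i := by
    intro t ht
    have h1 : ∑ j, P t j = (∑ j, P 0 j) + ∫ s in (0:ℝ)..t, ∑ j, v s j := by
      calc ∑ j, P t j = ∑ j, (P 0 j + ∫ s in (0:ℝ)..t, v s j) :=
            Finset.sum_congr rfl fun j _ => habs j t ht
        _ = (∑ j, P 0 j) + ∑ j, ∫ s in (0:ℝ)..t, v s j := Finset.sum_add_distrib
        _ = (∑ j, P 0 j) + ∫ s in (0:ℝ)..t, ∑ j, v s j := by
            rw [intervalIntegral.integral_finset_sum]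
            intro j _; exact hii j 0 t le_rfl ht
    have h2 : (∫ s in (0:ℝ)..t, ∑ j, v s j) = 0 := by
      rw [intervalIntegral.integral_of_le ht]
      apply MeasureTheory.integral_eq_zero_of_ae
      have hQ' := ae_restrict_of_ae_restrict_of_subset (fun s (hs : s ∈ Set.Ioc (0:ℝ) t) => le_of_lt hs.1) hQ
      filter_upwards [hQ'] with s hs
      exact hs.1
    rw [h1, h2, add_zero, hp0sum]
  -- nonnegativity
  have hnonnegP : ∀ j, ∀ t, 0 ≤ t → 0 ≤ P t j := by
    intro j t1 ht1
    by_contra hneg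
    push_neg at hneg
    have ht1pos : 0 < t1 := by
      rcases eq_or_lt_of_le ht1 with h | h
      · exfalso; rw [← h] at hneg; exact absurd hneg (not_lt.2 (hp0nonneg j))
      · exact h
    -- continuity of t ↦ P t j on [0, t1]
    have hcontf : ContinuousOn (fun t => P t j) (Set.Icc 0 t1) := by
      have hint : MeasureTheory.IntegrableOn (fun s => v s j) (Set.uIcc 0 t1) volume := by
        apply (hvint j).integrableOn_compact_subset ?_ isCompact_uIcc
        rw [Set.uIcc_of_le ht1]
        exact fun s hs => hs.1
      have h1 : ContinuousOn (fun t => P 0 j + ∫ s in (0:ℝ)..t, v s j) (Set.Icc 0 t1) := by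
        apply continuousOn_const.add
        have := intervalIntegral.continuousOn_primitive_interval (a := (0:ℝ)) (b := t1) hint
        rwa [Set.uIcc_of_le ht1] at this
      apply h1.congr
      intro s hs
      exact habs j s hs.1
    set S : Set ℝ := Set.Icc 0 t1 ∩ (fun t => P t j) ⁻¹' Set.Ici 0 with hSdef
    have hS0 : (0:ℝ) ∈ S := ⟨⟨le_rfl, ht1⟩, hp0nonneg j⟩
    have hSbdd : BddAbove S := ⟨t1, fun s hs => hs.1.2⟩
    have hSclosed : IsClosed S :=
      hcontf.preimage_isClosed_of_isClosed isClosed_Icc isClosed_Ici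
    set t0 := sSup S with ht0def
    have ht0mem : t0 ∈ S := hSclosed.csSup_mem ⟨0, hS0⟩ hSbdd
    have ht00 : 0 ≤ t0 := ht0mem.1.1
    have ht0le : t0 ≤ t1 := ht0mem.1.2
    have hPt0 : 0 ≤ P t0 j := ht0mem.2
    have ht0lt : t0 < t1 := by
      rcases eq_or_lt_of_le ht0le with h | h
      · exact absurd (h ▸ hPt0) (not_le.2 hneg)
      · exact h
    have hbetween : ∀ s, t0 < s → s ≤ t1 → P s j < 0 := by
      intro s hs0 hs1
      by_contra hc
      push_neg at hc
      have : s ∈ S := ⟨⟨le_trans ht00 hs0.le, hs1⟩, hc⟩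
      exact absurd (le_csSup hSbdd this) (not_le.2 hs0)
    -- integral identity
    have hadj : (∫ s in (0:ℝ)..t0, v s j) + (∫ s in t0..t1, v s j)
        = ∫ s in (0:ℝ)..t1, v s j :=
      intervalIntegral.integral_add_adjacent_intervals
        (hii j 0 t0 le_rfl ht00) (hii j t0 t1 ht00 ht1)
    have hdiff : P t1 j = P t0 j + ∫ s in t0..t1, v s j := by
      have e1 := habs j t1 ht1
      have e0 := habs j t0 ht00
      rw [e1, e0]
      linarith
    -- the integral is nonnegative
    have hintnn : 0 ≤ ∫ s in t0..t1, v s j := by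
      apply intervalIntegral.integral_nonneg_of_ae_restrict ht0lt.le
      have hQ' : ∀ᵐ s ∂(volume.restrict (Set.Icc t0 t1)),
          (∑ k, v s k = 0) ∧ ∀ k, P s k ≤ 0 → 0 < v s k :=
        ae_restrict_of_ae_restrict_of_subset
          (fun s hs => le_trans ht00 hs.1) hQ
      have hne : ∀ᵐ s ∂(volume.restrict (Set.Icc t0 t1)), s ≠ t0 := by
        apply MeasureTheory.ae_restrict_of_ae
        rw [MeasureTheory.ae_iff]
        have : {s : ℝ | ¬ s ≠ t0} = {t0} := by ext s; simp
        rw [this]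
        exact MeasureTheory.measure_singleton t0
      have hmemIcc : ∀ᵐ s ∂(volume.restrict (Set.Icc t0 t1)), s ∈ Set.Icc t0 t1 :=
        MeasureTheory.ae_restrict_mem measurableSet_Icc
      filter_upwards [hQ', hne, hmemIcc] with s hsQ hsne hsmem
      have hs0 : t0 < s := lt_of_le_of_ne hsmem.1 (Ne.symm hsne)
      have hPs : P s j < 0 := hbetween s hs0 hsmem.2
      exact (hsQ.2 j hPs.le).le
    linarith [hneg, hPt0, hdiff, hintnn]
  intro t ht
  exact ⟨fun j => hnonnegP j t ht, hsumP t ht⟩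
end

section
/- Let d(x) = (Σ_{j=1}^m d_j x_j^ρ)^{1/ρ} with d_j > 0 and ρ ∈ (1,2]. Then the squared disutility d(x)^2 = (Σ_j d_j x_j^ρ)^{2/ρ} is μ-strongly convex on the cube C = { x ∈ R^m_+ : ‖x‖_∞ ≤ R } with μ = 2(ρ-1)(min_j d_j)^{2/ρ}, where R = (min_j d_j)^{-1/ρ}. Moreover ‖∇(d(x)^2)‖ ≤ 2(Σ_j d_j^{2/ρ})^{1/2} for all x with d(x) ≤ 1. -/
open Finset

section CesAux

open Real Set
lemma convexOn_of_forall_segment {E : Type*} [NormedAddCommGroup E] [NormedSpace ℝ E]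
    {s : Set E} (hs : Convex ℝ s) {f : E → ℝ}
    (h : ∀ x ∈ s, ∀ y ∈ s, ConvexOn ℝ (Set.Icc (0:ℝ) 1) (fun t => f (x + t • (y - x)))) :
    ConvexOn ℝ s f := by
  refine ⟨hs, fun x hx y hy a b ha hb hab => ?_⟩
  have h2 := (h x hx y hy).2 (x := (0:ℝ)) (y := (1:ℝ))
    ⟨le_refl 0, zero_le_one⟩ ⟨zero_le_one, le_refl 1⟩ ha hb hab
  simp only [smul_eq_mul, mul_zero, mul_one, zero_add] at h2
  have e1 : x + b • (y - x) = a • x + b • y := by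
    have : a = 1 - b := by linarith
    subst this
    simp [smul_sub, sub_smul, one_smul]
    abel
  have e0 : x + (0:ℝ) • (y - x) = x := by simp
  have e2 : x + (1:ℝ) • (y - x) = y := by simp
  rw [e1, e0, e2] at h2
  simpa using h2

lemma key_ineq {ρ dm dj S u : ℝ} (hρ1 : 1 < ρ) (hρ2 : ρ ≤ 2)
    (hdm : 0 < dm) (hdj : dm ≤ dj) (hu : 0 < u) (hS : dj * u ^ ρ ≤ S) :
    dm ^ ((2:ℝ)/ρ) ≤ S ^ ((2:ℝ)/ρ - 1) * (dj * u ^ (ρ - 2)) := by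
  have hρ0 : (0:ℝ) < ρ := by linarith
  have hdj0 : (0:ℝ) < dj := lt_of_lt_of_le hdm hdj
  have huρ : (0:ℝ) < u ^ ρ := Real.rpow_pos_of_pos hu ρ
  have hS0 : (0:ℝ) < S := lt_of_lt_of_le (by positivity) hS
  have hexp : (0:ℝ) ≤ (2:ℝ)/ρ - 1 := by
    rw [sub_nonneg, le_div_iff₀ hρ0]; linarith
  have h1 : (dj * u ^ ρ) ^ ((2:ℝ)/ρ - 1) ≤ S ^ ((2:ℝ)/ρ - 1) :=
    Real.rpow_le_rpow (by positivity) hS hexp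
  have h2 : (dj * u ^ ρ) ^ ((2:ℝ)/ρ - 1) = dj ^ ((2:ℝ)/ρ - 1) * u ^ (2 - ρ) := by
    rw [Real.mul_rpow hdj0.le huρ.le, ← Real.rpow_mul hu.le]
    congr 1
    field_simp
  have h3 : dj ^ ((2:ℝ)/ρ - 1) * u ^ (2 - ρ) * (dj * u ^ (ρ - 2)) = dj ^ ((2:ℝ)/ρ) := by
    rw [show dj ^ ((2:ℝ)/ρ - 1) * u ^ (2 - ρ) * (dj * u ^ (ρ - 2))
        = (dj ^ ((2:ℝ)/ρ - 1) * dj) * (u ^ (2 - ρ) * u ^ (ρ - 2)) by ring,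
      ← Real.rpow_add hu, ← Real.rpow_add_one hdj0.ne']
    norm_num
  have h4 : dm ^ ((2:ℝ)/ρ) ≤ dj ^ ((2:ℝ)/ρ) := Real.rpow_le_rpow hdm.le hdj (by positivity)
  calc dm ^ ((2:ℝ)/ρ) ≤ dj ^ ((2:ℝ)/ρ) := h4
    _ = dj ^ ((2:ℝ)/ρ - 1) * u ^ (2 - ρ) * (dj * u ^ (ρ - 2)) := h3.symm
    _ = (dj * u ^ ρ) ^ ((2:ℝ)/ρ - 1) * (dj * u ^ (ρ - 2)) := by rw [h2]
    _ ≤ S ^ ((2:ℝ)/ρ - 1) * (dj * u ^ (ρ - 2)) := by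
        apply mul_le_mul_of_nonneg_right h1
        positivity

lemma seg_convex (m : ℕ) (ρ : ℝ) (hρ1 : 1 < ρ) (hρ2 : ρ ≤ 2)
    (d : Fin m → ℝ) (hd : ∀ j, 0 < d j) (dm : ℝ) (hdm : 0 < dm) (hdmle : ∀ j, dm ≤ d j)
    (X Y : Fin m → ℝ) (hX : ∀ j, 0 ≤ X j) (hY : ∀ j, 0 ≤ Y j) :
    ConvexOn ℝ (Set.Icc (0:ℝ) 1)
      (fun t => (∑ j, d j * (X j + t * (Y j - X j)) ^ ρ) ^ ((2:ℝ)/ρ)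
        - (2 * (ρ - 1) * dm ^ ((2:ℝ)/ρ)) / 2 * ∑ j, (X j + t * (Y j - X j)) ^ 2) := by
  classical
  by_cases hne : ∃ j, X j ≠ 0 ∨ Y j ≠ 0
  case neg =>
    -- X = Y = 0, function is constant
    push_neg at hne
    have : ∀ j t, X j + t * (Y j - X j) = 0 := by
      intro j t; rw [(hne j).1, (hne j).2]; ring
    have hfun : (fun t : ℝ => (∑ j, d j * (X j + t * (Y j - X j)) ^ ρ) ^ ((2:ℝ)/ρ)
        - (2 * (ρ - 1) * dm ^ ((2:ℝ)/ρ)) / 2 * ∑ j, (X j + t * (Y j - X j)) ^ 2)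
        = fun _ => (∑ j : Fin m, d j * (0:ℝ) ^ ρ) ^ ((2:ℝ)/ρ) := by
      funext t
      simp only [this]
      simp
    rw [hfun]
    exact convexOn_const _ (convex_Icc 0 1)
  have hρ0 : (0:ℝ) < ρ := lt_trans one_pos hρ1
  set μ : ℝ := 2 * (ρ - 1) * dm ^ ((2:ℝ)/ρ) with hμ
  set V : Fin m → ℝ := fun j => Y j - X j with hVdef
  set u : Fin m → ℝ → ℝ := fun j t => X j + t * (Y j - X j) with hudef
  have hud : ∀ j t, HasDerivAt (fun t => u j t) (V j) t := by
    intro j t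
    simpa [hudef, hVdef] using ((hasDerivAt_id t).mul_const (Y j - X j)).const_add (X j)
  have hu_eq : ∀ j t, u j t = (1 - t) * X j + t * Y j := by intro j t; simp [hudef]; ring
  have hu_nonneg : ∀ j, ∀ t ∈ Set.Icc (0:ℝ) 1, 0 ≤ u j t := by
    intro j t ht
    rw [hu_eq]
    have := ht.1; have := ht.2
    have h1 : 0 ≤ (1 - t) * X j := mul_nonneg (by linarith) (hX j)
    have h2 : 0 ≤ t * Y j := mul_nonneg (by linarith) (hY j)
    linarith
  have hu_pos : ∀ j, ∀ t ∈ Set.Ioo (0:ℝ) 1, (X j ≠ 0 ∨ Y j ≠ 0) → 0 < u j t := by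
    intro j t ht hj
    rw [hu_eq]
    rcases hj with hj | hj
    · have hXj : 0 < X j := lt_of_le_of_ne (hX j) (Ne.symm hj)
      have h1 : 0 < (1 - t) * X j := mul_pos (by linarith [ht.2]) hXj
      have h2 : 0 ≤ t * Y j := mul_nonneg (le_of_lt ht.1) (hY j)
      linarith
    · have hYj : 0 < Y j := lt_of_le_of_ne (hY j) (Ne.symm hj)
      have h2 : 0 < t * Y j := mul_pos ht.1 hYj
      have h1 : 0 ≤ (1 - t) * X j := mul_nonneg (by linarith [ht.2]) (hX j)
      linarith
  set S : ℝ → ℝ := fun t => ∑ j, d j * (u j t) ^ ρ with hSdef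
  set S₁ : ℝ → ℝ := fun t => ∑ j, d j * (V j * ρ * (u j t) ^ (ρ - 1)) with hS₁def
  set S₂ : ℝ → ℝ := fun t => ∑ j, d j * (V j * V j * (ρ * (ρ - 1)) * (u j t) ^ (ρ - 2))
    with hS₂def
  have hSd : ∀ t, HasDerivAt S (S₁ t) t := by
    intro t
    exact HasDerivAt.fun_sum fun j _ => ((hud j t).rpow_const (Or.inr hρ1.le)).const_mul (d j)
  have hS_pos : ∀ t ∈ Set.Ioo (0:ℝ) 1, 0 < S t := by
    intro t ht
    obtain ⟨j0, hj0⟩ := hne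
    apply Finset.sum_pos' (fun j _ =>
      mul_nonneg (hd j).le (Real.rpow_nonneg (hu_nonneg j t ⟨le_of_lt ht.1, le_of_lt ht.2⟩) ρ))
    exact ⟨j0, Finset.mem_univ _,
      mul_pos (hd j0) (Real.rpow_pos_of_pos (hu_pos j0 t ht hj0) ρ)⟩
  have hS₁d : ∀ t ∈ Set.Ioo (0:ℝ) 1, HasDerivAt S₁ (S₂ t) t := by
    intro t ht
    apply HasDerivAt.fun_sum
    intro j _
    by_cases hVj : V j = 0
    · simpa [hVj] using hasDerivAt_const t (0:ℝ)
    · have hXYj : X j ≠ 0 ∨ Y j ≠ 0 := by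
        by_contra hc
        push_neg at hc
        exact hVj (by simp [hVdef, hc.1, hc.2])
      have hupos := hu_pos j t ht hXYj
      have h := ((hud j t).rpow_const (p := ρ - 1) (Or.inl hupos.ne')).const_mul (d j * (V j * ρ))
      have e : (fun t' => (d j * (V j * ρ)) * (u j t') ^ (ρ - 1))
          = fun t' => d j * (V j * ρ * (u j t') ^ (ρ - 1)) := by funext t'; ring
      rw [e] at h
      convert h using 1
      · rfl
      rw [show ρ - 1 - 1 = ρ - 2 by ring]
      ring
  set N : ℝ → ℝ := fun t => ∑ j, (u j t) ^ 2 with hNdef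
  set N₁ : ℝ → ℝ := fun t => ∑ j, 2 * u j t * V j with hN₁def
  have hNd : ∀ t, HasDerivAt N (N₁ t) t := by
    intro t
    apply HasDerivAt.fun_sum
    intro j _
    have := (hud j t).fun_pow 2
    simpa using this
  have hN₁d : ∀ t, HasDerivAt N₁ (∑ j, 2 * V j * V j) t := by
    intro t
    exact HasDerivAt.fun_sum fun j _ => ((hud j t).const_mul 2).mul_const (V j)
  set Φ₁ : ℝ → ℝ := fun t => S₁ t * ((2:ℝ)/ρ) * S t ^ ((2:ℝ)/ρ - 1) - μ / 2 * N₁ t with hΦ₁def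
  have hφd : ∀ t ∈ Set.Ioo (0:ℝ) 1,
      HasDerivAt (fun t => S t ^ ((2:ℝ)/ρ) - μ / 2 * N t) (Φ₁ t) t := by
    intro t ht
    exact ((hSd t).rpow_const (Or.inl (hS_pos t ht).ne')).sub ((hNd t).const_mul (μ / 2))
  set Φ₂ : ℝ → ℝ := fun t => (S₂ t * ((2:ℝ)/ρ)) * S t ^ ((2:ℝ)/ρ - 1)
      + (S₁ t * ((2:ℝ)/ρ)) * (S₁ t * ((2:ℝ)/ρ - 1) * S t ^ ((2:ℝ)/ρ - 1 - 1))
      - μ / 2 * ∑ j, 2 * V j * V j with hΦ₂def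
  have hΦ₁d : ∀ t ∈ Set.Ioo (0:ℝ) 1, HasDerivAt Φ₁ (Φ₂ t) t := by
    intro t ht
    exact (((hS₁d t ht).mul_const ((2:ℝ)/ρ)).mul
      ((hSd t).rpow_const (Or.inl (hS_pos t ht).ne'))).sub ((hN₁d t).const_mul (μ / 2))
  have hρne : ρ ≠ 0 := hρ0.ne'
  have hexp1 : (0:ℝ) ≤ (2:ℝ)/ρ - 1 := by
    rw [sub_nonneg, le_div_iff₀ hρ0]; linarith
  -- continuity
  have hucont : ∀ j, Continuous fun t => u j t :=
    fun j => continuous_iff_continuousAt.2 fun t => (hud j t).continuousAt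
  have hScont : Continuous S := by
    apply continuous_finset_sum
    intro j _
    exact continuous_const.mul (Continuous.rpow_const (hucont j) (fun t => Or.inr hρ0.le))
  have hNcont : Continuous N :=
    continuous_finset_sum _ fun j _ => (hucont j).pow 2
  have hφcont : Continuous (fun t => S t ^ ((2:ℝ)/ρ) - μ / 2 * N t) := by
    apply Continuous.sub
    · exact Continuous.rpow_const hScont (fun t => Or.inr (by positivity))
    · exact continuous_const.mul hNcont
  show ConvexOn ℝ (Set.Icc (0:ℝ) 1) (fun t => S t ^ ((2:ℝ)/ρ) - μ / 2 * N t)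
  apply convexOn_of_hasDerivWithinAt2_nonneg (convex_Icc 0 1) (f' := Φ₁) (f'' := Φ₂)
      hφcont.continuousOn
  · rw [interior_Icc]
    exact fun t ht => (hφd t ht).hasDerivWithinAt
  · rw [interior_Icc]
    exact fun t ht => (hΦ₁d t ht).hasDerivWithinAt
  · rw [interior_Icc]
    intro t ht
    have hSpos := hS_pos t ht
    -- nonnegativity of the "A" term
    have hAnn : 0 ≤ (S₁ t * ((2:ℝ)/ρ)) * (S₁ t * ((2:ℝ)/ρ - 1) * S t ^ ((2:ℝ)/ρ - 1 - 1)) := by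
      have h2 : (0:ℝ) ≤ S t ^ ((2:ℝ)/ρ - 1 - 1) := (Real.rpow_pos_of_pos hSpos _).le
      have e : (S₁ t * ((2:ℝ)/ρ)) * (S₁ t * ((2:ℝ)/ρ - 1) * S t ^ ((2:ℝ)/ρ - 1 - 1))
          = (S₁ t * S₁ t) * (((2:ℝ)/ρ) * (((2:ℝ)/ρ - 1) * S t ^ ((2:ℝ)/ρ - 1 - 1))) := by ring
      rw [e]
      exact mul_nonneg (mul_self_nonneg _)
        (mul_nonneg (by positivity) (mul_nonneg hexp1 h2))
    -- the "B" term dominates the quadratic correction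
    have hBle : μ / 2 * ∑ j, 2 * V j * V j ≤ (S₂ t * ((2:ℝ)/ρ)) * S t ^ ((2:ℝ)/ρ - 1) := by
      have eL : μ / 2 * ∑ j, 2 * V j * V j = ∑ j, μ * (V j * V j) := by
        rw [Finset.mul_sum]
        exact Finset.sum_congr rfl fun j _ => by ring
      have eR : (S₂ t * ((2:ℝ)/ρ)) * S t ^ ((2:ℝ)/ρ - 1)
          = ∑ j, (d j * (V j * V j * (ρ * (ρ - 1)) * (u j t) ^ (ρ - 2)) * ((2:ℝ)/ρ))
              * S t ^ ((2:ℝ)/ρ - 1) := by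
        rw [hS₂def]
        rw [← Finset.sum_mul, ← Finset.sum_mul]
      rw [eL, eR]
      apply Finset.sum_le_sum
      intro j _
      by_cases hVj : V j = 0
      · simp [hVj]
      · have hXYj : X j ≠ 0 ∨ Y j ≠ 0 := by
          by_contra hc
          push_neg at hc
          exact hVj (by simp [hVdef, hc.1, hc.2])
        have hupos := hu_pos j t ht hXYj
        have hSineq : d j * (u j t) ^ ρ ≤ S t := by
          apply Finset.single_le_sum (f := fun k => d k * (u k t) ^ ρ)
            (fun k _ => mul_nonneg (hd k).le
              (Real.rpow_nonneg (hu_nonneg k t ⟨ht.1.le, ht.2.le⟩) ρ)) (Finset.mem_univ j)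
        have key := key_ineq hρ1 hρ2 hdm (hdmle j) hupos hSineq
        have hfac : 0 ≤ 2 * (ρ - 1) * (V j * V j) :=
          mul_nonneg (by linarith) (mul_self_nonneg _)
        have hmul := mul_le_mul_of_nonneg_left key hfac
        calc μ * (V j * V j) = (2 * (ρ - 1) * (V j * V j)) * dm ^ ((2:ℝ)/ρ) := by
              rw [hμ]; ring
          _ ≤ (2 * (ρ - 1) * (V j * V j)) * (S t ^ ((2:ℝ)/ρ - 1) * (d j * (u j t) ^ (ρ - 2))) :=
              hmul
          _ = (d j * (V j * V j * (ρ * (ρ - 1)) * (u j t) ^ (ρ - 2)) * ((2:ℝ)/ρ))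
              * S t ^ ((2:ℝ)/ρ - 1) := by
              field_simp
    rw [hΦ₂def]
    dsimp only
    linarith [hAnn, hBle]

lemma coord_le_norm {m : ℕ} (h : EuclideanSpace ℝ (Fin m)) (j : Fin m) : |h j| ≤ ‖h‖ := by
  rw [EuclideanSpace.norm_eq, ← Real.sqrt_sq_eq_abs]
  apply Real.sqrt_le_sqrt
  refine Finset.single_le_sum (f := fun k => ‖h k‖ ^ 2) (fun k _ => by positivity)
    (Finset.mem_univ j) |>.trans_eq' ?_
  rw [Real.norm_eq_abs, sq_abs]

lemma grad_term_ineq {ρ dj S xj : ℝ} (hρ1 : 1 < ρ) (hρ2 : ρ ≤ 2) (hdj : 0 < dj)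
    (hxj : 0 ≤ xj) (hS0 : 0 < S) (hS1 : S ≤ 1) (hle : dj * xj ^ ρ ≤ S) :
    (S ^ ((2:ℝ)/ρ - 1) * (dj * xj ^ (ρ - 1))) ^ 2 ≤ dj ^ ((2:ℝ)/ρ) := by
  have hρ0 : (0:ℝ) < ρ := by linarith
  rcases eq_or_lt_of_le hxj with hxj0 | hxj0
  · rw [← hxj0, Real.zero_rpow (by intro hc; rw [sub_eq_zero] at hc; linarith)]
    simpa using (Real.rpow_pos_of_pos hdj _).le
  have hA : S ^ ((2:ℝ)/ρ - 1) ≤ 1 := by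
    apply Real.rpow_le_one hS0.le hS1
    rw [sub_nonneg, le_div_iff₀ hρ0]; linarith
  have hAnn : 0 ≤ S ^ ((2:ℝ)/ρ - 1) := (Real.rpow_pos_of_pos hS0 _).le
  have hBnn : 0 ≤ dj * xj ^ (ρ - 1) := mul_nonneg hdj.le (Real.rpow_nonneg hxj _)
  have step1 : (S ^ ((2:ℝ)/ρ - 1) * (dj * xj ^ (ρ - 1))) ^ 2 ≤ (dj * xj ^ (ρ - 1)) ^ 2 := by
    rw [mul_pow]
    have h1 : (S ^ ((2:ℝ)/ρ - 1)) ^ 2 ≤ 1 := pow_le_one₀ hAnn hA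
    nlinarith [sq_nonneg (dj * xj ^ (ρ - 1))]
  have h1 : xj ^ ρ ≤ dj⁻¹ := by
    have h2 : dj * xj ^ ρ ≤ 1 := hle.trans hS1
    rw [inv_eq_one_div, le_div_iff₀ hdj]
    linarith [h2]
  have hexp : (0:ℝ) ≤ (2*ρ - 2)/ρ := by
    apply div_nonneg _ hρ0.le; linarith
  have h2 : xj ^ (2*ρ - 2) ≤ dj ^ (-((2*ρ - 2)/ρ)) := by
    have e1 : xj ^ (2*ρ - 2) = (xj ^ ρ) ^ ((2*ρ - 2)/ρ) := by
      rw [← Real.rpow_mul hxj]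
      congr 1
      field_simp
    have e2 : (dj⁻¹) ^ ((2*ρ - 2)/ρ) = dj ^ (-((2*ρ - 2)/ρ)) := by
      rw [← Real.rpow_neg_one dj, ← Real.rpow_mul hdj.le]
      congr 1
      ring
    rw [e1, ← e2]
    exact Real.rpow_le_rpow (Real.rpow_nonneg hxj _) h1 hexp
  have step2 : (dj * xj ^ (ρ - 1)) ^ 2 ≤ dj ^ ((2:ℝ)/ρ) := by
    have e3 : (dj * xj ^ (ρ - 1)) ^ 2 = dj ^ (2:ℝ) * xj ^ (2*ρ - 2) := by
      rw [mul_pow]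
      congr 1
      · rw [← Real.rpow_natCast dj 2]; norm_num
      · rw [← Real.rpow_natCast (xj ^ (ρ - 1)) 2, ← Real.rpow_mul hxj]
        congr 1
        push_cast
        ring
    rw [e3]
    calc dj ^ (2:ℝ) * xj ^ (2*ρ - 2) ≤ dj ^ (2:ℝ) * dj ^ (-((2*ρ - 2)/ρ)) :=
          mul_le_mul_of_nonneg_left h2 (Real.rpow_nonneg hdj.le _)
      _ = dj ^ ((2:ℝ) + -((2*ρ - 2)/ρ)) := (Real.rpow_add hdj _ _).symm
      _ = dj ^ ((2:ℝ)/ρ) := by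
          congr 1
          field_simp
          ring
  exact step1.trans step2

end CesAux

/-- For the CES disutility `d(x) = (Σ_j d_j x_j^ρ)^{1/ρ}` with `d_j > 0`
and `ρ ∈ (1,2]`, the squared disutility `d(x)² = (Σ_j d_j x_j^ρ)^{2/ρ}` is
`μ`-strongly convex on the cube `C = { x ∈ ℝ^m₊ : ‖x‖_∞ ≤ R }` with
`μ = 2(ρ-1)(min_j d_j)^{2/ρ}` and `R = (min_j d_j)^{-1/ρ}`; moreover
`‖∇(d(x)²)‖ ≤ 2(Σ_j d_j^{2/ρ})^{1/2}` whenever `d(x) ≤ 1`. -/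
theorem squared_ces_strongly_convex
    (m : ℕ) (hm : 0 < m) (ρ : ℝ) (hρ1 : 1 < ρ) (hρ2 : ρ ≤ 2)
    (d : Fin m → ℝ) (hd : ∀ j, 0 < d j) :
    StrongConvexOn
      {x : EuclideanSpace ℝ (Fin m) | (∀ j, 0 ≤ x j) ∧ ∀ j, x j ≤ (⨅ j', d j') ^ (-(1/ρ))}
      (2 * (ρ - 1) * (⨅ j, d j) ^ ((2:ℝ)/ρ))
      (fun x : EuclideanSpace ℝ (Fin m) => (∑ j, d j * (x j) ^ ρ) ^ ((2:ℝ)/ρ)) ∧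
    ∀ x : EuclideanSpace ℝ (Fin m), (∀ j, 0 ≤ x j) →
      (∑ j, d j * (x j) ^ ρ) ^ (1/ρ) ≤ 1 →
      ‖gradient (fun y : EuclideanSpace ℝ (Fin m) =>
          (∑ j, d j * (y j) ^ ρ) ^ ((2:ℝ)/ρ)) x‖
        ≤ 2 * (∑ j, (d j) ^ ((2:ℝ)/ρ)) ^ ((1:ℝ)/2) := by
  refine ⟨?_, ?_⟩
  ·
    haveI : Nonempty (Fin m) := ⟨⟨0, hm⟩⟩
    have hbdd : BddBelow (Set.range d) := (Set.finite_range d).bddBelow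
    have hdm : 0 < ⨅ j, d j := by
      obtain ⟨j₀, hj₀⟩ := (Set.range_nonempty d).csInf_mem (Set.finite_range d)
      rw [← sInf_range, ← hj₀]
      exact hd j₀
    have hdmle : ∀ j, (⨅ j', d j') ≤ d j := fun j => ciInf_le hbdd j
    have hconv : Convex ℝ {x : EuclideanSpace ℝ (Fin m) |
        (∀ j, 0 ≤ x j) ∧ ∀ j, x j ≤ (⨅ j', d j') ^ (-(1/ρ))} := by
      intro x hx y hy a b ha hb hab
      constructor
      · intro j
        have : (a • x + b • y) j = a * x j + b * y j := by
          simp [PiLp.add_apply, PiLp.smul_apply, smul_eq_mul]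
        rw [this]
        exact add_nonneg (mul_nonneg ha (hx.1 j)) (mul_nonneg hb (hy.1 j))
      · intro j
        have e : (a • x + b • y) j = a * x j + b * y j := by
          simp [PiLp.add_apply, PiLp.smul_apply, smul_eq_mul]
        rw [e]
        calc a * x j + b * y j ≤ a * (⨅ j', d j') ^ (-(1/ρ)) + b * (⨅ j', d j') ^ (-(1/ρ)) :=
              add_le_add (mul_le_mul_of_nonneg_left (hx.2 j) ha)
                (mul_le_mul_of_nonneg_left (hy.2 j) hb)
          _ = (⨅ j', d j') ^ (-(1/ρ)) := by rw [← add_mul, hab, one_mul]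
    rw [strongConvexOn_iff_convex]
    apply convexOn_of_forall_segment hconv
    intro x hx y hy
    have hseg := seg_convex m ρ hρ1 hρ2 d hd (⨅ j, d j) hdm hdmle
      (fun j => x j) (fun j => y j) hx.1 hy.1
    convert hseg using 1
    funext t
    have hz : ∀ j, (x + t • (y - x)) j = x j + t * (y j - x j) := by
      intro j
      simp [PiLp.add_apply, PiLp.smul_apply, PiLp.sub_apply, smul_eq_mul]
    have hnorm : ‖x + t • (y - x)‖ ^ 2 = ∑ j, ((x + t • (y - x)) j) ^ 2 := by
      rw [EuclideanSpace.norm_eq]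
      rw [Real.sq_sqrt (by positivity)]
      exact Finset.sum_congr rfl fun j _ => by rw [Real.norm_eq_abs, sq_abs]
    rw [hnorm]
    simp only [hz]
  ·
    intro x hx hd1
    have hρ0 : (0:ℝ) < ρ := by linarith
    have hρne : ρ ≠ 0 := hρ0.ne'
    have hsumd : (0:ℝ) ≤ ∑ j, (d j) ^ ((2:ℝ)/ρ) :=
      Finset.sum_nonneg fun j _ => Real.rpow_nonneg (hd j).le _
    have hrhs : (0:ℝ) ≤ 2 * (∑ j, (d j) ^ ((2:ℝ)/ρ)) ^ ((1:ℝ)/2) :=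
      mul_nonneg (by norm_num) (Real.rpow_nonneg hsumd _)
    set S : ℝ := ∑ j, d j * (x j) ^ ρ with hSdef
    have hS0 : 0 ≤ S := Finset.sum_nonneg fun j _ =>
      mul_nonneg (hd j).le (Real.rpow_nonneg (hx j) _)
    have hS1 : S ≤ 1 := by
      by_contra hc
      push_neg at hc
      have : (1:ℝ) < S ^ ((1:ℝ)/ρ) :=
        (Real.one_lt_rpow_iff_of_pos (by linarith)).2 (Or.inl ⟨hc, one_div_pos.2 hρ0⟩)
      rw [show (1:ℝ)/ρ = 1/ρ by norm_num] at this
      linarith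
    by_cases hS : S = 0
    · -- x = 0 case
      have hx0 : x = 0 := by
        refine PiLp.ext fun j => ?_
        have : d j * (x j) ^ ρ = 0 := by
          have := (Finset.sum_eq_zero_iff_of_nonneg (fun k (_ : k ∈ Finset.univ) =>
            mul_nonneg (hd k).le (Real.rpow_nonneg (hx k) ρ))).1 hS j (Finset.mem_univ j)
          exact this
        have hxρ : (x j) ^ ρ = 0 := by
          rcases mul_eq_zero.1 this with h | h
          · exact absurd h (hd j).ne'
          · exact h
        have := (Real.rpow_eq_zero_iff_of_nonneg (hx j)).1 hxρ
        exact this.1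
      subst hx0
      have hf0 : (∑ j, d j * ((0 : EuclideanSpace ℝ (Fin m)) j) ^ ρ) ^ ((2:ℝ)/ρ) = 0 := by
        simp [Real.zero_rpow hρne]
        exact Real.zero_rpow (by positivity)
      have hder : HasFDerivAt (fun y : EuclideanSpace ℝ (Fin m) =>
          (∑ j, d j * (y j) ^ ρ) ^ ((2:ℝ)/ρ)) (0 : EuclideanSpace ℝ (Fin m) →L[ℝ] ℝ) 0 := by
        rw [hasFDerivAt_iff_isLittleO_nhds_zero]
        simp only [zero_add, ContinuousLinearMap.zero_apply, sub_zero, hf0]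
        have hbound : ∀ h : EuclideanSpace ℝ (Fin m),
            ‖(∑ j, d j * (h j) ^ ρ) ^ ((2:ℝ)/ρ)‖ ≤ (∑ j, d j) ^ ((2:ℝ)/ρ) * ‖(‖h‖ ^ 2)‖ := by
          intro h
          have h1 : |∑ j, d j * (h j) ^ ρ| ≤ (∑ j, d j) * ‖h‖ ^ ρ := by
            calc |∑ j, d j * (h j) ^ ρ| ≤ ∑ j, |d j * (h j) ^ ρ| := Finset.abs_sum_le_sum_abs _ _
              _ ≤ ∑ j, d j * ‖h‖ ^ ρ := by
                  apply Finset.sum_le_sum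
                  intro j _
                  rw [abs_mul, abs_of_pos (hd j)]
                  apply mul_le_mul_of_nonneg_left _ (hd j).le
                  calc |(h j) ^ ρ| ≤ |h j| ^ ρ := Real.abs_rpow_le_abs_rpow _ _
                    _ ≤ ‖h‖ ^ ρ := Real.rpow_le_rpow (abs_nonneg _) (coord_le_norm h j) hρ0.le
              _ = (∑ j, d j) * ‖h‖ ^ ρ := by rw [Finset.sum_mul]
          calc ‖(∑ j, d j * (h j) ^ ρ) ^ ((2:ℝ)/ρ)‖
              = |(∑ j, d j * (h j) ^ ρ) ^ ((2:ℝ)/ρ)| := rfl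
            _ ≤ |∑ j, d j * (h j) ^ ρ| ^ ((2:ℝ)/ρ) := Real.abs_rpow_le_abs_rpow _ _
            _ ≤ ((∑ j, d j) * ‖h‖ ^ ρ) ^ ((2:ℝ)/ρ) :=
                Real.rpow_le_rpow (abs_nonneg _) h1 (by positivity)
            _ = (∑ j, d j) ^ ((2:ℝ)/ρ) * ‖h‖ ^ 2 := by
                rw [Real.mul_rpow (Finset.sum_nonneg fun j _ => (hd j).le)
                  (Real.rpow_nonneg (norm_nonneg _) _), ← Real.rpow_mul (norm_nonneg _)]
                congr 1
                rw [show ρ * ((2:ℝ)/ρ) = 2 by field_simp]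
                rw [← Real.rpow_natCast ‖h‖ 2]
                norm_num
            _ = (∑ j, d j) ^ ((2:ℝ)/ρ) * ‖(‖h‖ ^ 2)‖ := by
                rw [Real.norm_eq_abs, abs_of_nonneg (by positivity)]
        have hbigO : (fun h : EuclideanSpace ℝ (Fin m) => (∑ j, d j * (h j) ^ ρ) ^ ((2:ℝ)/ρ))
            =O[nhds 0] (fun h => ‖h‖ ^ 2) :=
          Asymptotics.IsBigO.of_bound _ (Filter.Eventually.of_forall hbound)
        exact hbigO.trans_isLittleO (Asymptotics.isLittleO_norm_pow_id one_lt_two)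
      have hgrad : gradient (fun y : EuclideanSpace ℝ (Fin m) =>
          (∑ j, d j * (y j) ^ ρ) ^ ((2:ℝ)/ρ)) 0 = 0 := by
        have := hder.hasGradientAt.gradient
        rw [this]
        simp
      rw [hgrad, norm_zero]
      exact hrhs
    · -- S > 0 case
      have hSpos : 0 < S := lt_of_le_of_ne hS0 (Ne.symm hS)
      set G : EuclideanSpace ℝ (Fin m) :=
        WithLp.toLp 2 (fun j => 2 * S ^ ((2:ℝ)/ρ - 1) * (d j * (x j) ^ (ρ - 1))) with hGdef
      have hSder : HasFDerivAt (fun y : EuclideanSpace ℝ (Fin m) => ∑ j, d j * (y j) ^ ρ)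
          (∑ j, d j • ((ρ * (x j) ^ (ρ - 1)) • EuclideanSpace.proj (𝕜 := ℝ) j)) x := by
        apply HasFDerivAt.fun_sum
        intro j _
        exact ((EuclideanSpace.proj (𝕜 := ℝ) j).hasFDerivAt.rpow_const
          (Or.inr hρ1.le)).const_mul (d j)
      have hFull : HasFDerivAt (fun y : EuclideanSpace ℝ (Fin m) =>
          (∑ j, d j * (y j) ^ ρ) ^ ((2:ℝ)/ρ))
          (((2:ℝ)/ρ * S ^ ((2:ℝ)/ρ - 1)) •
            ∑ j, d j • ((ρ * (x j) ^ (ρ - 1)) • EuclideanSpace.proj (𝕜 := ℝ) j)) x :=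
        hSder.rpow_const (Or.inl hSpos.ne')
      have hdual : (InnerProductSpace.toDual ℝ (EuclideanSpace ℝ (Fin m))) G
          = ((2:ℝ)/ρ * S ^ ((2:ℝ)/ρ - 1)) •
            ∑ j, d j • ((ρ * (x j) ^ (ρ - 1)) • EuclideanSpace.proj (𝕜 := ℝ) j) := by
        apply ContinuousLinearMap.ext
        intro v
        simp only [InnerProductSpace.toDual_apply_apply, PiLp.inner_apply, RCLike.inner_apply,
          conj_trivial, ContinuousLinearMap.smul_apply, ContinuousLinearMap.sum_apply,
          PiLp.proj_apply, smul_eq_mul, Finset.mul_sum]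
        apply Finset.sum_congr rfl
        intro j _
        rw [hGdef]
        field_simp
      have hgrad : gradient (fun y : EuclideanSpace ℝ (Fin m) =>
          (∑ j, d j * (y j) ^ ρ) ^ ((2:ℝ)/ρ)) x = G := by
        apply HasGradientAt.gradient
        rw [hasGradientAt_iff_hasFDerivAt, hdual]
        exact hFull
      rw [hgrad]
      rw [EuclideanSpace.norm_eq]
      have hsum_le : ∑ j, ‖G j‖ ^ 2 ≤ 4 * ∑ j, (d j) ^ ((2:ℝ)/ρ) := by
        rw [Finset.mul_sum]
        apply Finset.sum_le_sum
        intro j _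
        have hSineq : d j * (x j) ^ ρ ≤ S :=
          Finset.single_le_sum (f := fun k => d k * (x k) ^ ρ)
            (fun k _ => mul_nonneg (hd k).le (Real.rpow_nonneg (hx k) _)) (Finset.mem_univ j)
        have hkey := grad_term_ineq hρ1 hρ2 (hd j) (hx j) hSpos hS1 hSineq
        have e : ‖G j‖ ^ 2 = 4 * (S ^ ((2:ℝ)/ρ - 1) * (d j * (x j) ^ (ρ - 1))) ^ 2 := by
          rw [Real.norm_eq_abs, sq_abs, hGdef]
          ring
        rw [e]
        linarith
      calc Real.sqrt (∑ j, ‖G j‖ ^ 2) ≤ Real.sqrt (4 * ∑ j, (d j) ^ ((2:ℝ)/ρ)) :=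
            Real.sqrt_le_sqrt hsum_le
        _ = 2 * (∑ j, (d j) ^ ((2:ℝ)/ρ)) ^ ((1:ℝ)/2) := by
            rw [show (4:ℝ) = 2 ^ 2 by norm_num, Real.sqrt_mul (by positivity),
              Real.sqrt_sq (by norm_num), Real.sqrt_eq_rpow]
end

section
/- Suppose for each i ∈ [n], the function d_i°: Δ_B → R is differentiable with L_i-Lipschitz gradient on Δ_B, d_i°(p) ≥ r_i > 0 on Δ_B, and ‖∇d_i°(p)‖ ≤ R_i on Δ_B. Then f(p) = -Σ_j p_j + Σ_i B_i log(d_i°(p)) is L-smooth on Δ_B with L = Σ_i B_i ( L_i/r_i + R_i(L_i‖B‖_1 + R_i)/r_i² ). -/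
open Finset

/-- The price simplex `Δ_B`. -/
def priceSimplex (m : ℕ) (Bsum : ℝ) : Set (EuclideanSpace ℝ (Fin m)) :=
  {p | (∀ j, 0 ≤ p j) ∧ (∑ j, p j) = Bsum}

lemma priceSimplex_convex (m : ℕ) (Bsum : ℝ) : Convex ℝ (priceSimplex m Bsum) := by
  intro x hx y hy a b ha hb hab
  constructor
  · intro j
    have hxy : (a • x + b • y) j = a * x j + b * y j := rfl
    rw [hxy]
    have := hx.1 j; have := hy.1 j
    positivity
  · have hxy : ∀ j, (a • x + b • y) j = a * x j + b * y j := fun j => rfl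
    simp only [hxy]
    rw [Finset.sum_add_distrib, ← Finset.mul_sum, ← Finset.mul_sum, hx.2, hy.2,
      ← add_mul, hab, one_mul]

lemma norm_symm_sub (m : ℕ) (a b : EuclideanSpace ℝ (Fin m) →L[ℝ] ℝ) :
    ‖(InnerProductSpace.toDual ℝ (EuclideanSpace ℝ (Fin m))).symm a -
      (InnerProductSpace.toDual ℝ (EuclideanSpace ℝ (Fin m))).symm b‖ = ‖a - b‖ := by
  rw [← map_sub, LinearIsometryEquiv.norm_map]

set_option maxHeartbeats 1000000 in
/-- If each gauge dual `d_i°` is differentiable with `L_i`-Lipschitz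
gradient on `Δ_B`, lower bounded by `r_i > 0` on `Δ_B`, and has gradient norm at most
`R_i` on `Δ_B`, then `f(p) = -Σ_j p_j + Σ_i B_i log(d_i°(p))` is `L`-smooth on `Δ_B`
with `L = Σ_i B_i ( L_i/r_i + R_i(L_i‖B‖₁ + R_i)/r_i² )`. -/
theorem potential_smoothness
    (n m : ℕ) (B : Fin n → ℝ) (hB : ∀ i, 0 < B i)
    (dcirc : Fin n → EuclideanSpace ℝ (Fin m) → ℝ)
    (Li ri Ri : Fin n → ℝ)
    (hri : ∀ i, 0 < ri i)
    (hdiff : ∀ i, ∀ p ∈ priceSimplex m (∑ i', B i'), DifferentiableAt ℝ (dcirc i) p)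
    (hLip : ∀ i, ∀ p1 ∈ priceSimplex m (∑ i', B i'), ∀ p2 ∈ priceSimplex m (∑ i', B i'),
      ‖gradient (dcirc i) p1 - gradient (dcirc i) p2‖ ≤ Li i * ‖p1 - p2‖)
    (hlb : ∀ i, ∀ p ∈ priceSimplex m (∑ i', B i'), ri i ≤ dcirc i p)
    (hgb : ∀ i, ∀ p ∈ priceSimplex m (∑ i', B i'), ‖gradient (dcirc i) p‖ ≤ Ri i) :
    ∀ p1 ∈ priceSimplex m (∑ i', B i'), ∀ p2 ∈ priceSimplex m (∑ i', B i'),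
      ‖gradient (fun p : EuclideanSpace ℝ (Fin m) =>
          -(∑ j, p j) + ∑ i, B i * Real.log (dcirc i p)) p1 -
        gradient (fun p : EuclideanSpace ℝ (Fin m) =>
          -(∑ j, p j) + ∑ i, B i * Real.log (dcirc i p)) p2‖
      ≤ (∑ i, B i * (Li i / ri i + Ri i * (Li i * (∑ i', B i') + Ri i) / (ri i) ^ 2))
          * ‖p1 - p2‖ := by
  intro p1 hp1 p2 hp2
  have hSdef : True := trivial
  by_cases hpp : p1 = p2
  · subst hpp; simp
  have hdist : 0 < ‖p1 - p2‖ := by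
    rw [norm_pos_iff]; exact sub_ne_zero.mpr hpp
  have hLnn : ∀ i, 0 ≤ Li i := by
    intro i
    have h := (norm_nonneg _).trans (hLip i p1 hp1 p2 hp2)
    nlinarith
  have hRnn : ∀ i, 0 ≤ Ri i := fun i => (norm_nonneg _).trans (hgb i p1 hp1)
  have hBs : (0:ℝ) ≤ ∑ i', B i' := Finset.sum_nonneg fun i _ => (hB i).le
  have hconv : Convex ℝ (priceSimplex m (∑ i', B i')) := priceSimplex_convex m _
  -- the sum functional
  set T : EuclideanSpace ℝ (Fin m) →L[ℝ] ℝ := ∑ j, EuclideanSpace.proj j with hT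
  have hTapp : ∀ q : EuclideanSpace ℝ (Fin m), T q = ∑ j, q j := by
    intro q; rw [hT, ContinuousLinearMap.sum_apply]; rfl
  -- fderiv formula
  have key : ∀ p ∈ priceSimplex m (∑ i', B i'), HasFDerivAt (fun p : EuclideanSpace ℝ (Fin m) =>
      -(∑ j, p j) + ∑ i, B i * Real.log (dcirc i p))
      ((-T) + ∑ i, (B i / dcirc i p) • fderiv ℝ (dcirc i) p) p := by
    intro p hp
    have h0 : HasFDerivAt (fun q : EuclideanSpace ℝ (Fin m) => -(∑ j, q j)) (-T) p := by
      have h := (T.hasFDerivAt (x := p)).neg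
      have : (fun q : EuclideanSpace ℝ (Fin m) => -(T q)) = fun q : EuclideanSpace ℝ (Fin m) => -(∑ j, q j) := by
        funext q; rw [hTapp]
      rw [← this]; exact h
    have h1 : ∀ i : Fin n, HasFDerivAt (fun q : EuclideanSpace ℝ (Fin m) => B i * Real.log (dcirc i q))
        ((B i / dcirc i p) • fderiv ℝ (dcirc i) p) p := by
      intro i
      have hd : HasFDerivAt (dcirc i) (fderiv ℝ (dcirc i) p) p :=
        (hdiff i p hp).hasFDerivAt
      have hpos : 0 < dcirc i p := lt_of_lt_of_le (hri i) (hlb i p hp)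
      have hlog : HasDerivAt Real.log (dcirc i p)⁻¹ (dcirc i p) :=
        Real.hasDerivAt_log hpos.ne'
      have h2 := (hlog.comp_hasFDerivAt p hd).const_mul (B i)
      have heq : B i • (dcirc i p)⁻¹ • fderiv ℝ (dcirc i) p
          = (B i / dcirc i p) • fderiv ℝ (dcirc i) p := by
        rw [smul_smul, div_eq_mul_inv]
      rw [heq] at h2
      exact h2
    exact h0.add (HasFDerivAt.fun_sum fun i _ => h1 i)
  -- gradient difference
  have hgradeq : ∀ p ∈ priceSimplex m (∑ i', B i'), fderiv ℝ (fun p : EuclideanSpace ℝ (Fin m) =>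
      -(∑ j, p j) + ∑ i, B i * Real.log (dcirc i p)) p
      = (-T) + ∑ i, (B i / dcirc i p) • fderiv ℝ (dcirc i) p :=
    fun p hp => (key p hp).fderiv
  have hnorm : ‖gradient (fun p : EuclideanSpace ℝ (Fin m) =>
          -(∑ j, p j) + ∑ i, B i * Real.log (dcirc i p)) p1 -
        gradient (fun p : EuclideanSpace ℝ (Fin m) =>
          -(∑ j, p j) + ∑ i, B i * Real.log (dcirc i p)) p2‖
      = ‖∑ i, ((B i / dcirc i p1) • fderiv ℝ (dcirc i) p1
          - (B i / dcirc i p2) • fderiv ℝ (dcirc i) p2)‖ := by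
    rw [show gradient (fun p : EuclideanSpace ℝ (Fin m) =>
          -(∑ j, p j) + ∑ i, B i * Real.log (dcirc i p))
        = fun x => (InnerProductSpace.toDual ℝ (EuclideanSpace ℝ (Fin m))).symm (fderiv ℝ (fun p : EuclideanSpace ℝ (Fin m) =>
          -(∑ j, p j) + ∑ i, B i * Real.log (dcirc i p)) x) from rfl]
    rw [norm_symm_sub, hgradeq p1 hp1, hgradeq p2 hp2, add_sub_add_left_eq_sub,
      ← Finset.sum_sub_distrib]
  rw [hnorm]
  -- per-term bound
  have hterm : ∀ i : Fin n, ‖(B i / dcirc i p1) • fderiv ℝ (dcirc i) p1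
      - (B i / dcirc i p2) • fderiv ℝ (dcirc i) p2‖
      ≤ (B i * (Li i / ri i + Ri i * (Li i * (∑ i', B i') + Ri i) / (ri i) ^ 2)) * ‖p1 - p2‖ := by
    intro i
    set d1 := dcirc i p1
    set d2 := dcirc i p2
    set g1 := fderiv ℝ (dcirc i) p1
    set g2 := fderiv ℝ (dcirc i) p2
    have hd1 : ri i ≤ d1 := hlb i p1 hp1
    have hd2 : ri i ≤ d2 := hlb i p2 hp2
    have hr := hri i
    have hd1p : 0 < d1 := lt_of_lt_of_le hr hd1
    have hd2p : 0 < d2 := lt_of_lt_of_le hr hd2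
    -- relate gradient norms to fderiv norms
    have hgradnorm : ∀ q : EuclideanSpace ℝ (Fin m), ‖gradient (dcirc i) q‖ = ‖fderiv ℝ (dcirc i) q‖ := by
      intro q
      rw [show gradient (dcirc i) q
        = (InnerProductSpace.toDual ℝ (EuclideanSpace ℝ (Fin m))).symm (fderiv ℝ (dcirc i) q) from rfl,
        LinearIsometryEquiv.norm_map]
    have hg12 : ‖g1 - g2‖ ≤ Li i * ‖p1 - p2‖ := by
      have h := hLip i p1 hp1 p2 hp2
      rwa [show gradient (dcirc i) p1 - gradient (dcirc i) p2
        = (InnerProductSpace.toDual ℝ (EuclideanSpace ℝ (Fin m))).symm g1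
          - (InnerProductSpace.toDual ℝ (EuclideanSpace ℝ (Fin m))).symm g2 from rfl, norm_symm_sub] at h
    have hg2R : ‖g2‖ ≤ Ri i := by rw [← hgradnorm]; exact hgb i p2 hp2
    -- MVT: |d1 - d2| ≤ Ri i * ‖p1 - p2‖
    have hmvt : |d1 - d2| ≤ Ri i * ‖p1 - p2‖ := by
      have := hconv.norm_image_sub_le_of_norm_fderiv_le
        (f := dcirc i) (C := Ri i)
        (fun x hx => hdiff i x hx)
        (fun x hx => by rw [← hgradnorm]; exact hgb i x hx) hp2 hp1
      rwa [Real.norm_eq_abs] at this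
    clear_value d1 d2 g1 g2
    -- split
    have hsplit : (B i / d1) • g1 - (B i / d2) • g2
        = (B i / d1) • (g1 - g2) + ((B i / d1) - (B i / d2)) • g2 := by
      rw [smul_sub, sub_smul]; abel
    rw [hsplit]
    have hc1 : ‖(B i / d1) • (g1 - g2)‖ ≤ (B i / ri i) * (Li i * ‖p1 - p2‖) := by
      rw [norm_smul, Real.norm_eq_abs, abs_of_pos (div_pos (hB i) hd1p)]
      apply mul_le_mul _ hg12 (norm_nonneg _) (div_pos (hB i) hr).le
      exact div_le_div_of_nonneg_left (hB i).le hr hd1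
    have hc2 : ‖((B i / d1) - (B i / d2)) • g2‖
        ≤ (B i * (Ri i * ‖p1 - p2‖) / (ri i)^2) * Ri i := by
      rw [norm_smul, Real.norm_eq_abs]
      have habs : |B i / d1 - B i / d2| = B i * |d2 - d1| / (d1 * d2) := by
        have hx : B i / d1 - B i / d2 = B i * (d2 - d1) / (d1 * d2) := by
          field_simp
        rw [hx, abs_div, abs_mul, abs_of_pos (hB i), abs_of_pos (mul_pos hd1p hd2p)]
      rw [habs]
      have h1 : B i * |d2 - d1| / (d1 * d2) ≤ B i * (Ri i * ‖p1 - p2‖) / (ri i)^2 := by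
        have hb : ri i ^ 2 ≤ d1 * d2 := by nlinarith
        have ha : B i * |d2 - d1| ≤ B i * (Ri i * ‖p1 - p2‖) :=
          mul_le_mul_of_nonneg_left (by rw [abs_sub_comm]; exact hmvt) (hB i).le
        exact div_le_div₀ (mul_nonneg (hB i).le (mul_nonneg (hRnn i) (norm_nonneg _)))
          ha (pow_pos hr 2) hb
      exact mul_le_mul h1 hg2R (norm_nonneg _)
        (div_nonneg (mul_nonneg (hB i).le (mul_nonneg (hRnn i) (norm_nonneg _))) (sq_nonneg _))
    have hexp : (B i * (Li i / ri i + Ri i * (Li i * (∑ i', B i') + Ri i) / (ri i) ^ 2)) * ‖p1 - p2‖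
        = (B i / ri i) * (Li i * ‖p1 - p2‖) + (B i * (Ri i * ‖p1 - p2‖) / (ri i)^2) * Ri i
          + (B i * (Ri i * (Li i * (∑ i', B i'))) * ‖p1 - p2‖) / (ri i)^2 := by
      field_simp
      ring
    have hpos : 0 ≤ (B i * (Ri i * (Li i * (∑ i', B i'))) * ‖p1 - p2‖) / (ri i)^2 := by
      have := hB i; have := hRnn i; have := hLnn i; have := hBs; positivity
    calc ‖(B i / d1) • (g1 - g2) + ((B i / d1) - (B i / d2)) • g2‖
        ≤ ‖(B i / d1) • (g1 - g2)‖ + ‖((B i / d1) - (B i / d2)) • g2‖ := norm_add_le _ _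
      _ ≤ (B i / ri i) * (Li i * ‖p1 - p2‖) + (B i * (Ri i * ‖p1 - p2‖) / (ri i)^2) * Ri i :=
          add_le_add hc1 hc2
      _ ≤ (B i * (Li i / ri i + Ri i * (Li i * (∑ i', B i') + Ri i) / (ri i) ^ 2)) * ‖p1 - p2‖ := by
          rw [hexp]; linarith
  calc ‖∑ i, ((B i / dcirc i p1) • fderiv ℝ (dcirc i) p1
      - (B i / dcirc i p2) • fderiv ℝ (dcirc i) p2)‖
      ≤ ∑ i, ‖(B i / dcirc i p1) • fderiv ℝ (dcirc i) p1
        - (B i / dcirc i p2) • fderiv ℝ (dcirc i) p2‖ := norm_sum_le _ _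
    _ ≤ ∑ i, (B i * (Li i / ri i + Ri i * (Li i * (∑ i', B i') + Ri i) / (ri i) ^ 2)) * ‖p1 - p2‖ :=
        Finset.sum_le_sum fun i _ => hterm i
    _ = (∑ i, B i * (Li i / ri i + Ri i * (Li i * (∑ i', B i') + Ri i) / (ri i) ^ 2)) * ‖p1 - p2‖ := by
        rw [Finset.sum_mul]
end

section
/- Consider the optimization problem minimizing f(p) = -Σ_j p_j + Σ_i B_i log( max{⟨p,x⟩ : x ≥ 0, d_i(x) ≤ 1} ) over p ≥ 0 subject to Σ_j p_j = Σ_i B_i, where d_i are CCH and strictly increasing in each coordinate. If (p̃, μ̃, α̃) satisfies the KKT conditions (α̃ - μ̃·1_m ∈ ∂f(p̃) = Z(p̃), α̃ ≥ 0, p̃_j α̃_j = 0, Σ_j p̃_j = Σ_i B_i, p̃ ≥ 0), then μ̃ = 0, α̃ = 0, p̃ > 0, and p̃ is an equilibrium price vector (0 ∈ Z(p̃)). Conversely every equilibrium price is a KKT point with α* = 0, μ* = 0. -/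
open Finset

/-- For the General EG Dual program (minimize
`f(p) = -Σ_j p_j + Σ_i B_i log(max{⟨p,x⟩ : x ≥ 0, d_i(x) ≤ 1})` over `p ≥ 0` with
`Σ_j p_j = Σ_i B_i`), whose Clarke subdifferential equals the excess demand `Z(p)`:
if `(p̃, μ̃, α̃)` satisfies the KKT conditions (`α̃ - μ̃·1_m ∈ Z(p̃)`, `α̃ ≥ 0`,
`p̃_j α̃_j = 0`, `Σ_j p̃_j = Σ_i B_i`, `p̃ ≥ 0`), then `μ̃ = 0`, `α̃ = 0`, `p̃ > 0`, and
`p̃` is an equilibrium price (`0 ∈ Z(p̃)`).  Conversely, every equilibrium price is a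
KKT point with `α* = 0`, `μ* = 0`. -/
theorem general_eg_dual_kkt_iff_CE
    (n m : ℕ) (hn : 0 < n) (hm : 0 < m)
    (B : Fin n → ℝ) (hB : ∀ i, 0 < B i)
    (d : Fin n → (Fin m → ℝ) → ℝ)
    (hcont : ∀ i, Continuous (d i))
    (hconv : ∀ i, ConvexOn ℝ {x : Fin m → ℝ | ∀ j, 0 ≤ x j} (d i))
    (hhom : ∀ i (c : ℝ), 0 < c → ∀ x : Fin m → ℝ, d i (c • x) = c * d i x)
    (hmono : ∀ i (x y : Fin m → ℝ), (∀ j, 0 ≤ x j) → (∀ j, x j ≤ y j) → x ≠ y →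
      d i x < d i y) :
    (∀ (pt : Fin m → ℝ) (μ : ℝ) (α : Fin m → ℝ),
      (∀ j, 0 ≤ α j) → (∀ j, pt j * α j = 0) →
      (∀ j, 0 ≤ pt j) → (∑ j, pt j) = (∑ i, B i) →
      (fun j => α j - μ) ∈ excessDemand n m d B pt →
      μ = 0 ∧ α = 0 ∧ (∀ j, 0 < pt j) ∧ (0 : Fin m → ℝ) ∈ excessDemand n m d B pt) ∧
    (∀ pt : Fin m → ℝ,
      (∀ j, 0 ≤ pt j) → (∑ j, pt j) = (∑ i, B i) →
      (0 : Fin m → ℝ) ∈ excessDemand n m d B pt →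
      ∃ (μ : ℝ) (α : Fin m → ℝ), μ = 0 ∧ α = 0 ∧
        (∀ j, 0 ≤ α j) ∧ (∀ j, pt j * α j = 0) ∧
        (fun j => α j - μ) ∈ excessDemand n m d B pt) := by

  constructor
  · intro pt μ α hα hcs hpt hsum hz
    obtain ⟨x, hx, hzeq⟩ := hz
    have hSB : 0 < ∑ i, B i := Finset.sum_pos (fun i _ => hB i) (by
      simpa using Finset.univ_nonempty_iff.mpr (Fin.pos_iff_nonempty.mp hn))
    -- d i 0 = 0
    have hd0 : ∀ i, d i 0 = 0 := by
      intro i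
      have := hhom i 2 (by norm_num) 0
      simp only [smul_zero] at this
      linarith
    -- each agent spends exactly B i
    have hspend : ∀ i, ∑ j, pt j * x i j = B i := by
      intro i
      obtain ⟨hxnn, hbud, hopt⟩ := hx i
      by_contra hne
      have hlt : B i < ∑ j, pt j * x i j := lt_of_le_of_ne hbud (Ne.symm hne)
      have hSpos : 0 < ∑ j, pt j * x i j := lt_trans (hB i) hlt
      set S := ∑ j, pt j * x i j with hS
      have hc0 : 0 < B i / S := div_pos (hB i) hSpos
      have hc1 : B i / S < 1 := (div_lt_one hSpos).mpr hlt
      -- x i ≠ 0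
      have hxne : x i ≠ 0 := by
        intro h
        have h0 : S = 0 := by rw [hS, h]; simp
        exact (ne_of_gt hSpos) h0
      have hdpos : 0 < d i (x i) := by
        have := hmono i 0 (x i) (fun j => le_refl 0) (fun j => hxnn j) (Ne.symm hxne)
        rwa [hd0 i] at this
      have hy : d i (x i) ≤ d i ((B i / S) • x i) := by
        apply hopt
        · intro j
          exact mul_nonneg hc0.le (hxnn j)
        · have : ∑ j, pt j * ((B i / S) • x i) j = (B i / S) * S := by
            rw [Finset.mul_sum]
            apply Finset.sum_congr rfl
            intro j _
            simp [mul_comm, mul_left_comm, mul_assoc]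
          rw [this, div_mul_cancel₀ _ (ne_of_gt hSpos)]
      rw [hhom i _ hc0] at hy
      nlinarith
    -- μ = 0 via ⟨pt, z⟩ = 0
    have hinner : ∑ j, pt j * ((∑ i, x i j) - 1) = 0 := by
      have h1 : ∑ j, pt j * ((∑ i, x i j) - 1)
          = (∑ j, ∑ i, pt j * x i j) - ∑ j, pt j := by
        rw [← Finset.sum_sub_distrib]
        apply Finset.sum_congr rfl
        intro j _
        rw [mul_sub, mul_one, Finset.mul_sum]
      rw [h1, Finset.sum_comm]
      have : ∀ i ∈ Finset.univ, ∑ j, pt j * x i j = B i := fun i _ => hspend i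
      rw [Finset.sum_congr rfl this, hsum]
      ring
    have hzj : ∀ j, α j - μ = (∑ i, x i j) - 1 := fun j => congrFun hzeq j
    have hμ : μ = 0 := by
      have h2 : ∑ j, pt j * (α j - μ) = 0 := by
        rw [Finset.sum_congr rfl (fun j _ => by rw [hzj j])]
        exact hinner
      have h3 : ∑ j, pt j * (α j - μ) = (∑ j, pt j * α j) - μ * ∑ j, pt j := by
        rw [Finset.mul_sum, ← Finset.sum_sub_distrib]
        apply Finset.sum_congr rfl
        intro j _
        ring
      rw [h3, Finset.sum_congr rfl (fun j (_ : j ∈ Finset.univ) => hcs j)] at h2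
      simp only [Finset.sum_const_zero, hsum] at h2
      have : μ * ∑ i, B i = 0 := by linarith
      rcases mul_eq_zero.mp this with h | h
      · exact h
      · exact absurd h (ne_of_gt hSB)
    -- pt j > 0
    have hptpos : ∀ j, 0 < pt j := by
      intro j
      rcases lt_or_eq_of_le (hpt j) with h | h
      · exact h
      · exfalso
        -- each x i j = 0
        have hxij : ∀ i, x i j = 0 := by
          intro i
          obtain ⟨hxnn, hbud, hopt⟩ := hx i
          by_contra hne
          have hpos : 0 < x i j := lt_of_le_of_ne (hxnn j) (Ne.symm hne)
          set y : Fin m → ℝ := Function.update (x i) j 0 with hy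
          have hynn : ∀ k, 0 ≤ y k := by
            intro k
            by_cases hk : k = j
            · subst hk; simp [hy]
            · simp [hy, Function.update_of_ne hk]; exact hxnn k
          have hybud : ∑ k, pt k * y k = ∑ k, pt k * x i k := by
            apply Finset.sum_congr rfl
            intro k _
            by_cases hk : k = j
            · subst hk; rw [← h]; ring
            · simp [hy, Function.update_of_ne hk]
          have hle : ∀ k, y k ≤ x i k := by
            intro k
            by_cases hk : k = j
            · subst hk; simp [hy]; exact hxnn k
            · simp [hy, Function.update_of_ne hk]
          have hyne : y ≠ x i := by
            intro heq
            have := congrFun heq j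
            simp [hy] at this
            exact absurd this.symm (ne_of_gt hpos)
          have := hmono i y (x i) hynn hle hyne
          have h2 := hopt y hynn (by rw [hybud]; exact hbud)
          linarith
        have := hzj j
        have hsx : (∑ i, x i j) = 0 := by
          apply Finset.sum_eq_zero; intro i _; exact hxij i
        rw [hsx, hμ] at this
        have := hα j
        linarith
    have hα0 : α = 0 := by
      funext j
      have := hcs j
      rcases mul_eq_zero.mp this with h | h
      · exact absurd h (ne_of_gt (hptpos j))
      · exact h
    refine ⟨hμ, hα0, hptpos, ?_⟩
    have : (0 : Fin m → ℝ) = fun j => α j - μ := by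
      funext j; rw [hμ, hα0]; simp
    rw [this]
    exact ⟨x, hx, hzeq⟩
  · intro pt hpt hsum h0
    refine ⟨0, 0, rfl, rfl, fun j => le_refl 0, fun j => mul_zero _, ?_⟩
    have : (fun j : Fin m => (0 : ℝ) - 0) = (0 : Fin m → ℝ) := by funext j; simp
    convert h0 using 1
    funext j; simp
end

section
/- Let f: R^m → R be locally Lipschitz and admit a chain rule, and let p: R_+ → R^m be an absolutely continuous trajectory of the gradient differential inclusion dp/dt ∈ -∂f(p). If p(0) is not a stationary point (0 ∉ ∂f(p(0))), then there exists T > 0 such that f(p(T)) < sup_{t ∈ [0,T]} f(p(t)) ≤ f(p(0)). -/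
open MeasureTheory RealInnerProductSpace

lemma LocallyLipschitz.exists_lipschitzOnWith' {α : Type*} [MetricSpace α] {f : α → ℝ}
    (hf : LocallyLipschitz f) {s : Set α} (hs : IsCompact s) :
    ∃ K : NNReal, LipschitzOnWith K f s := by
  have hcont := hf.continuous
  rcases s.eq_empty_or_nonempty with rfl | ⟨x₀, hx₀⟩
  · exact ⟨0, by simp [LipschitzOnWith]⟩
  choose Kf tf htf hlip using hf
  obtain ⟨C, hC⟩ := hs.exists_bound_of_continuousOn hcont.continuousOn
  have hC0 : 0 ≤ C := le_trans (norm_nonneg _) (hC x₀ hx₀)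
  obtain ⟨t₀, ht₀⟩ := hs.elim_nhds_subcover (fun x => interior (tf x))
    (fun x _ => interior_mem_nhds.2 (htf x)) |>.imp (fun t₀ h => h.2)
  obtain ⟨δ, hδ, hball⟩ := lebesgue_number_lemma_of_metric (c := fun i : t₀ => interior (tf i))
    hs (fun i => isOpen_interior) (by intro y hy; simpa using ht₀ hy)
  set K₀ : NNReal := t₀.sup Kf
  refine ⟨K₀ + Real.toNNReal (2 * C / δ), lipschitzOnWith_iff_dist_le_mul.2 fun x hx y hy => ?_⟩
  have hKcoe : ((K₀ + Real.toNNReal (2 * C / δ) : NNReal) : ℝ) = (K₀ : ℝ) + 2 * C / δ := by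
    rw [NNReal.coe_add, Real.coe_toNNReal _ (by positivity)]
  rcases lt_or_ge (dist x y) δ with h | h
  · obtain ⟨i, hi⟩ := hball x hx
    have hxi : x ∈ tf i := interior_subset (hi (Metric.mem_ball_self hδ))
    have hyi : y ∈ tf i := interior_subset (hi (by simpa [Metric.mem_ball, dist_comm] using h))
    calc dist (f x) (f y) ≤ (Kf i) * dist x y :=
          lipschitzOnWith_iff_dist_le_mul.1 (hlip i) x hxi y hyi
      _ ≤ ((K₀ + Real.toNNReal (2 * C / δ) : NNReal) : ℝ) * dist x y := by
          apply mul_le_mul_of_nonneg_right _ dist_nonneg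
          rw [hKcoe]
          have : (Kf i : ℝ) ≤ (K₀ : ℝ) := NNReal.coe_le_coe.2 (Finset.le_sup i.2)
          have h2 : 0 ≤ 2 * C / δ := by positivity
          linarith
  · calc dist (f x) (f y) ≤ ‖f x‖ + ‖f y‖ := dist_le_norm_add_norm _ _
      _ ≤ 2 * C := by have := hC x hx; have := hC y hy; linarith
      _ = 2 * C / δ * δ := by field_simp
      _ ≤ ((K₀ + Real.toNNReal (2 * C / δ) : NNReal) : ℝ) * dist x y := by
          rw [hKcoe]
          apply mul_le_mul _ h (le_of_lt hδ) (by positivity)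
          simp

lemma clamp_Ioc' (a b : ℝ) :
    Set.Ioc (max 0 (min a 1)) (max 0 (min b 1)) = Set.Ioc a b ∩ Set.Ioc 0 1 := by
  ext x
  simp only [Set.mem_Ioc, Set.mem_inter_iff, sup_lt_iff, lt_sup_iff, le_sup_iff, sup_le_iff,
    lt_inf_iff, inf_lt_iff, le_inf_iff, inf_le_iff]
  constructor
  · rintro ⟨⟨h0, h1⟩, h2⟩
    rcases h2 with h2 | h2
    · linarith
    · rcases h1 with h1 | h1
      · exact ⟨⟨h1, h2.1⟩, h0, h2.2⟩
      · linarith [h2.2]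
  · rintro ⟨⟨hax, hxb⟩, hx0, hx1⟩
    exact ⟨⟨hx0, Or.inl hax⟩, Or.inr ⟨hxb, hx1⟩⟩

lemma stieltjes_measure_eq_withDensity' (w : ℝ → ℝ) (hw0 : ∀ x, 0 ≤ w x)
    (hwint : IntervalIntegrable w volume 0 1) (Ψ : StieltjesFunction ℝ)
    (hΨval : ∀ x, Ψ x = ∫ s in (0:ℝ)..(max 0 (min x 1)), w s) :
    Ψ.measure
      = volume.withDensity ((Set.Ioc (0:ℝ) 1).indicator (fun x => ENNReal.ofReal (w x))) := by
  refine Measure.ext_of_Ioc _ _ (fun a b hab => ?_)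
  have hmem : ∀ t : ℝ, max 0 (min t 1) ∈ Set.Icc (0:ℝ) 1 :=
    fun t => ⟨le_max_left _ _, max_le zero_le_one (min_le_right _ _)⟩
  have hsub : ∀ x y : ℝ, x ∈ Set.Icc (0:ℝ) 1 → y ∈ Set.Icc (0:ℝ) 1 →
      IntervalIntegrable w volume x y := by
    intro x y hx hy
    refine hwint.mono_set ?_
    rw [Set.uIcc_of_le zero_le_one]
    exact Set.uIcc_subset_Icc hx hy
  set ca := max 0 (min a 1)
  set cb := max 0 (min b 1)
  have hcab : ca ≤ cb := max_le_max (le_refl 0) (min_le_min hab.le (le_refl 1))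
  have h1 : Ψ.measure (Set.Ioc a b) = ENNReal.ofReal (∫ s in ca..cb, w s) := by
    rw [Ψ.measure_Ioc, hΨval, hΨval]
    congr 1
    exact intervalIntegral.integral_interval_sub_left
      (hsub 0 cb ⟨le_refl 0, zero_le_one⟩ (hmem b))
      (hsub 0 ca ⟨le_refl 0, zero_le_one⟩ (hmem a))
  rw [h1, intervalIntegral.integral_of_le hcab,
    ofReal_integral_eq_lintegral_ofReal
      ((intervalIntegrable_iff_integrableOn_Ioc_of_le hcab).1 (hsub ca cb (hmem a) (hmem b)))
      (Filter.Eventually.of_forall (fun x => hw0 x)),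
    withDensity_apply _ measurableSet_Ioc, lintegral_indicator measurableSet_Ioc,
    Measure.restrict_restrict measurableSet_Ioc,
    show Set.Ioc ca cb = Set.Ioc a b ∩ Set.Ioc 0 1 from clamp_Ioc' a b, Set.inter_comm]

/-- Let `f : ℝ^m → ℝ` be locally Lipschitz and admit a chain rule with
respect to its (Clarke) subdifferential `D`, and let `P` be an absolutely continuous
trajectory of the gradient differential inclusion `dP/dt ∈ -D(P)`.  If `P(0)` is not a
stationary point (`0 ∉ D(P(0))`), then there exists `T > 0` with
`f(P(T)) < sup_{t ∈ [0,T]} f(P(t)) ≤ f(P(0))`. -/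
theorem descent_along_subgradient_trajectory
    (m : ℕ) (f : EuclideanSpace ℝ (Fin m) → ℝ)
    (D : EuclideanSpace ℝ (Fin m) → Set (EuclideanSpace ℝ (Fin m)))
    (hLip : LocallyLipschitz f)
    -- `f` admits a chain rule: along every absolutely continuous arc `q` with velocity
    -- `w`, for a.e. `t > 0`, `(d/dt) f(q(t)) = ⟪ν, w(t)⟫` for every `ν ∈ D(q(t))`.
    (hchain : ∀ (q w : ℝ → EuclideanSpace ℝ (Fin m)),
      (∀ t : ℝ, 0 ≤ t → IntervalIntegrable w volume 0 t) →
      (∀ t : ℝ, 0 ≤ t → q t = q 0 + ∫ s in (0:ℝ)..t, w s) →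
      ∀ᵐ t ∂(volume.restrict (Set.Ioi (0:ℝ))),
        ∀ ν ∈ D (q t), HasDerivAt (fun s => f (q s)) ⟪ν, w t⟫ t)
    (P v : ℝ → EuclideanSpace ℝ (Fin m))
    (hvint : ∀ t : ℝ, 0 ≤ t → IntervalIntegrable v volume 0 t)
    (habs : ∀ t : ℝ, 0 ≤ t → P t = P 0 + ∫ s in (0:ℝ)..t, v s)
    (hincl : ∀ᵐ t ∂(volume.restrict (Set.Ioi (0:ℝ))), -(v t) ∈ D (P t))
    (hnonstat : (0 : EuclideanSpace ℝ (Fin m)) ∉ D (P 0)) :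
    ∃ T : ℝ, 0 < T ∧
      f (P T) < sSup ((fun t => f (P t)) '' Set.Icc (0:ℝ) T) ∧
      sSup ((fun t => f (P t)) '' Set.Icc (0:ℝ) T) ≤ f (P 0) := by
  classical
  set g : ℝ → ℝ := fun t => f (P t) with hgdef
  -- basic integrability
  have hv1 : IntervalIntegrable v volume 0 1 := hvint 1 zero_le_one
  have hvab : ∀ a b : ℝ, a ∈ Set.Icc (0:ℝ) 1 → b ∈ Set.Icc (0:ℝ) 1 →
      IntervalIntegrable v volume a b := by
    intro a b ha hb
    refine hv1.mono_set ?_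
    rw [Set.uIcc_of_le zero_le_one]
    exact Set.uIcc_subset_Icc ha hb
  have hnab : ∀ a b : ℝ, a ∈ Set.Icc (0:ℝ) 1 → b ∈ Set.Icc (0:ℝ) 1 →
      IntervalIntegrable (fun s => ‖v s‖) volume a b := fun a b ha hb => (hvab a b ha hb).norm
  set H : ℝ → ℝ := fun t => ∫ s in (0:ℝ)..t, ‖v s‖ with hHdef
  have hPd : ∀ a b : ℝ, a ∈ Set.Icc (0:ℝ) 1 → b ∈ Set.Icc (0:ℝ) 1 →
      P b - P a = ∫ s in a..b, v s := by
    intro a b ha hb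
    rw [habs a ha.1, habs b hb.1, add_sub_add_left_eq_sub]
    exact intervalIntegral.integral_interval_sub_left (hvab 0 b ⟨le_refl 0, zero_le_one⟩ hb)
      (hvab 0 a ⟨le_refl 0, zero_le_one⟩ ha)
  have hHd : ∀ a b : ℝ, a ∈ Set.Icc (0:ℝ) 1 → b ∈ Set.Icc (0:ℝ) 1 →
      H b - H a = ∫ s in a..b, ‖v s‖ := by
    intro a b ha hb
    exact intervalIntegral.integral_interval_sub_left (hnab 0 b ⟨le_refl 0, zero_le_one⟩ hb)
      (hnab 0 a ⟨le_refl 0, zero_le_one⟩ ha)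
  have hPH : ∀ a b : ℝ, a ∈ Set.Icc (0:ℝ) 1 → b ∈ Set.Icc (0:ℝ) 1 → a ≤ b →
      ‖P b - P a‖ ≤ H b - H a := by
    intro a b ha hb hab
    rw [hPd a b ha hb, hHd a b ha hb]
    exact intervalIntegral.norm_integral_le_integral_norm hab
  have hHmono : ∀ a b : ℝ, a ∈ Set.Icc (0:ℝ) 1 → b ∈ Set.Icc (0:ℝ) 1 → a ≤ b → H a ≤ H b := by
    intro a b ha hb hab
    have h1 := hHd a b ha hb
    have h2 : (0:ℝ) ≤ ∫ s in a..b, ‖v s‖ :=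
      intervalIntegral.integral_nonneg hab (fun x _ => norm_nonneg _)
    linarith
  -- continuity
  have hHcont : ContinuousOn H (Set.Icc (0:ℝ) 1) := by
    have := intervalIntegral.continuousOn_primitive_interval' (μ := volume)
      hv1.norm (a := 0) (by rw [Set.uIcc_of_le zero_le_one]; exact ⟨le_refl 0, zero_le_one⟩)
    rwa [Set.uIcc_of_le zero_le_one] at this
  have hPcont : ContinuousOn P (Set.Icc (0:ℝ) 1) := by
    have h1 : ContinuousOn (fun t => P 0 + ∫ s in (0:ℝ)..t, v s) (Set.Icc (0:ℝ) 1) := by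
      refine ContinuousOn.add continuousOn_const ?_
      have := intervalIntegral.continuousOn_primitive_interval' (μ := volume)
        hv1 (a := 0) (by rw [Set.uIcc_of_le zero_le_one]; exact ⟨le_refl 0, zero_le_one⟩)
      rwa [Set.uIcc_of_le zero_le_one] at this
    exact h1.congr (fun t ht => habs t ht.1)
  have hgcont : ContinuousOn g (Set.Icc (0:ℝ) 1) :=
    hLip.continuous.comp_continuousOn hPcont
  -- Lipschitz constant on the image
  obtain ⟨K, hK⟩ := hLip.exists_lipschitzOnWith'
    (isCompact_Icc.image_of_continuousOn hPcont)
  have hglip : ∀ a b : ℝ, a ∈ Set.Icc (0:ℝ) 1 → b ∈ Set.Icc (0:ℝ) 1 → a ≤ b →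
      |g b - g a| ≤ (K:ℝ) * (H b - H a) := by
    intro a b ha hb hab
    have h1 : dist (g b) (g a) ≤ (K:ℝ) * dist (P b) (P a) :=
      lipschitzOnWith_iff_dist_le_mul.1 hK (P b) ⟨b, hb, rfl⟩ (P a) ⟨a, ha, rfl⟩
    rw [Real.dist_eq, dist_eq_norm] at h1
    refine h1.trans (mul_le_mul_of_nonneg_left ?_ K.coe_nonneg)
    exact hPH a b ha hb hab
  -- the clamp function
  set c : ℝ → ℝ := fun t => max 0 (min t 1) with hcdef
  have hcmem : ∀ t, c t ∈ Set.Icc (0:ℝ) 1 :=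
    fun t => ⟨le_max_left _ _, max_le zero_le_one (min_le_right _ _)⟩
  have hcid : ∀ t ∈ Set.Icc (0:ℝ) 1, c t = t := by
    intro t ht; simp [hcdef, min_eq_left ht.2, max_eq_right ht.1]
  have hcmono : Monotone c := fun a b hab =>
    max_le_max (le_refl 0) (min_le_min hab (le_refl 1))
  have hccont : Continuous c := continuous_const.max (continuous_id.min continuous_const)
  -- monotone envelopes
  have hψmono : Monotone (fun t => (K:ℝ) * H (c t)) := by
    intro a b hab
    exact mul_le_mul_of_nonneg_left
      (hHmono _ _ (hcmem a) (hcmem b) (hcmono hab)) K.coe_nonneg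
  have hφmono : Monotone (fun t => (K:ℝ) * H (c t) - g (c t)) := by
    intro a b hab
    have h1 := hHmono _ _ (hcmem a) (hcmem b) (hcmono hab)
    have h2 := abs_le.1 (hglip _ _ (hcmem a) (hcmem b) (hcmono hab))
    simp only []
    linarith [h2.2]
  have hψcont : Continuous (fun t => (K:ℝ) * H (c t)) :=
    continuous_const.mul (hHcont.comp_continuous hccont hcmem)
  have hφcont : Continuous (fun t => (K:ℝ) * H (c t) - g (c t)) :=
    hψcont.sub (hgcont.comp_continuous hccont hcmem)
  have hSF : ∀ (F : ℝ → ℝ) (hF : Monotone F), Continuous F →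
      ∀ x, hF.stieltjesFunction x = F x := by
    intro F hF hFc x
    rw [hF.stieltjesFunction_eq]
    exact rightLim_eq_of_tendsto (h := nhdsGT_neBot x)
      ((hFc.tendsto x).mono_left nhdsWithin_le_nhds)
  -- measurability of the density
  have hvm : AEStronglyMeasurable v (volume.restrict (Set.Ioc (0:ℝ) 1)) :=
    ((intervalIntegrable_iff_integrableOn_Ioc_of_le zero_le_one).1 hv1).aestronglyMeasurable
  have hnm : AEMeasurable (fun x => ENNReal.ofReal ((K:ℝ) * ‖v x‖))
      (volume.restrict (Set.Ioc (0:ℝ) 1)) :=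
    ENNReal.measurable_ofReal.comp_aemeasurable
      ((hvm.norm.aemeasurable).const_mul (K:ℝ))
  set ρ : ℝ → ENNReal :=
    (Set.Ioc (0:ℝ) 1).indicator (fun x => ENNReal.ofReal ((K:ℝ) * ‖v x‖)) with hρdef
  have hρm : AEMeasurable ρ volume :=
    (aemeasurable_indicator_iff measurableSet_Ioc).2 hnm
  -- the measure of ψ's Stieltjes function
  have hμΨ : hψmono.stieltjesFunction.measure = volume.withDensity ρ := by
    refine stieltjes_measure_eq_withDensity' (fun x => (K:ℝ) * ‖v x‖)
      (fun x => by positivity) (hv1.norm.const_mul _) _ (fun x => ?_)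
    rw [hSF _ hψmono hψcont x, intervalIntegral.integral_const_mul]
  -- derivative of ψ a.e. on (0,1)
  have hψd : ∀ᵐ x : ℝ, x ∈ Set.Ioo (0:ℝ) 1 → HasDerivAt (fun t => (K:ℝ) * H (c t))
      ((K:ℝ) * ‖v x‖) x := by
    have hrn : (hψmono.stieltjesFunction.measure).rnDeriv volume =ᵐ[volume] ρ := by
      rw [hμΨ]
      exact Measure.rnDeriv_withDensity₀ volume hρm
    filter_upwards [hψmono.ae_hasDerivAt, hrn] with x h1 h2 hx
    rw [h2] at h1
    rwa [hρdef, Set.indicator_of_mem (Set.Ioo_subset_Ioc_self hx),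
      ENNReal.toReal_ofReal (by positivity)] at h1
  -- derivative of g a.e. on (0,1)
  have hgd : ∀ᵐ x : ℝ, x ∈ Set.Ioo (0:ℝ) 1 → HasDerivAt g (-‖v x‖^2) x := by
    have h1 := hchain P v hvint habs
    have h2 : ∀ᵐ t ∂(volume.restrict (Set.Ioi (0:ℝ))), HasDerivAt g (-‖v t‖^2) t := by
      filter_upwards [h1, hincl] with t ht hinc
      have := ht (-(v t)) hinc
      rwa [inner_neg_left, real_inner_self_eq_norm_sq] at this
    rw [ae_restrict_iff' measurableSet_Ioi] at h2
    filter_upwards [h2] with x hx hx'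
    exact hx hx'.1
  -- rnDeriv of φ a.e. on (0,1)
  have hrnφ : ∀ᵐ x : ℝ, x ∈ Set.Ioo (0:ℝ) 1 →
      (hφmono.stieltjesFunction.measure).rnDeriv volume x
        = ENNReal.ofReal ((K:ℝ) * ‖v x‖ + ‖v x‖^2) := by
    filter_upwards [hφmono.ae_hasDerivAt, hψd, hgd,
      Measure.rnDeriv_lt_top hφmono.stieltjesFunction.measure volume] with x h1 h2 h3 h4 hx
    have hgc : HasDerivAt (fun t => g (c t)) (-‖v x‖^2) x := by
      refine (h3 hx).congr_of_eventuallyEq ?_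
      filter_upwards [isOpen_Ioo.mem_nhds hx] with t ht
      rw [hcid t (Set.Ioo_subset_Icc_self ht)]
    have h5 : HasDerivAt (fun t => (K:ℝ) * H (c t) - g (c t))
        ((K:ℝ) * ‖v x‖ + ‖v x‖^2) x := by
      have := (h2 hx).sub hgc
      rwa [sub_neg_eq_add] at this
    have h6 := h5.unique h1
    rw [h6, ENNReal.ofReal_toReal h4.ne]
  -- key estimate : for all T in (0,1], g T + (lintegral of ‖v‖²) ≤ g 0
  have hkey : ∀ T : ℝ, T ∈ Set.Ioc (0:ℝ) 1 →
      g T + (∫⁻ x in Set.Ioc 0 T, ENNReal.ofReal (‖v x‖^2)).toReal ≤ g 0 ∧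
      (∫⁻ x in Set.Ioc 0 T, ENNReal.ofReal (‖v x‖^2)) ≠ ⊤ := by
    intro T hT
    have hT01 : T ∈ Set.Icc (0:ℝ) 1 := ⟨hT.1.le, hT.2⟩
    have h01 : (0:ℝ) ∈ Set.Icc (0:ℝ) 1 := ⟨le_refl 0, zero_le_one⟩
    -- a.e. identification of the rnDeriv on Ioc 0 T
    have hae : ∀ᵐ x ∂(volume.restrict (Set.Ioc (0:ℝ) T)),
        (hφmono.stieltjesFunction.measure).rnDeriv volume x
          = ENNReal.ofReal ((K:ℝ) * ‖v x‖ + ‖v x‖^2) := by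
      rw [ae_restrict_iff' measurableSet_Ioc]
      have hne : ∀ᵐ x : ℝ, x ≠ T := by
        rw [ae_iff]
        simpa using Real.volume_singleton (a := T)
      filter_upwards [hrnφ, hne] with x h1 h2 hx
      rcases eq_or_lt_of_le hx.2 with h | h
      · exact absurd h h2
      · exact h1 ⟨hx.1, lt_of_lt_of_le h hT.2⟩
    have hstep1 : ∫⁻ x in Set.Ioc 0 T, ENNReal.ofReal ((K:ℝ) * ‖v x‖ + ‖v x‖^2)
        ≤ ENNReal.ofReal (((K:ℝ) * H (c T) - g (c T)) - ((K:ℝ) * H (c 0) - g (c 0))) := by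
      calc ∫⁻ x in Set.Ioc 0 T, ENNReal.ofReal ((K:ℝ) * ‖v x‖ + ‖v x‖^2)
          = ∫⁻ x in Set.Ioc 0 T, (hφmono.stieltjesFunction.measure).rnDeriv volume x :=
            (lintegral_congr_ae hae).symm
        _ = (volume.withDensity ((hφmono.stieltjesFunction.measure).rnDeriv volume))
              (Set.Ioc 0 T) := (withDensity_apply _ measurableSet_Ioc).symm
        _ ≤ hφmono.stieltjesFunction.measure (Set.Ioc 0 T) :=
            Measure.withDensity_rnDeriv_le _ _ _
        _ = ENNReal.ofReal (((K:ℝ) * H (c T) - g (c T)) - ((K:ℝ) * H (c 0) - g (c 0))) := by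
            rw [StieltjesFunction.measure_Ioc, hSF _ hφmono hφcont, hSF _ hφmono hφcont]
    -- split the left side
    have hsplit : ∫⁻ x in Set.Ioc 0 T, ENNReal.ofReal ((K:ℝ) * ‖v x‖ + ‖v x‖^2)
        = (∫⁻ x in Set.Ioc 0 T, ENNReal.ofReal ((K:ℝ) * ‖v x‖))
          + ∫⁻ x in Set.Ioc 0 T, ENNReal.ofReal (‖v x‖^2) := by
      rw [← lintegral_add_left' (hnm.mono_measure
        (Measure.restrict_mono (Set.Ioc_subset_Ioc_right hT.2) le_rfl))]
      congr 1
      ext x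
      rw [ENNReal.ofReal_add (by positivity) (by positivity)]
    have hKint : ∫⁻ x in Set.Ioc 0 T, ENNReal.ofReal ((K:ℝ) * ‖v x‖)
        = ENNReal.ofReal ((K:ℝ) * (H T - H 0)) := by
      rw [hHd 0 T h01 hT01, ← intervalIntegral.integral_const_mul,
        intervalIntegral.integral_of_le hT.1.le,
        ofReal_integral_eq_lintegral_ofReal]
      · exact ((intervalIntegrable_iff_integrableOn_Ioc_of_le hT.1.le).1
          ((hnab 0 T h01 hT01).const_mul _))
      · exact Filter.Eventually.of_forall (fun x => by positivity)
    rw [hsplit, hKint] at hstep1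
    have hfin : (∫⁻ x in Set.Ioc 0 T, ENNReal.ofReal (‖v x‖^2)) ≠ ⊤ := by
      intro hcon
      have h7 := lt_of_le_of_lt hstep1 ENNReal.ofReal_lt_top
      rw [hcon] at h7
      simp at h7
    refine ⟨?_, hfin⟩
    have hφ0T : 0 ≤ ((K:ℝ) * H (c T) - g (c T)) - ((K:ℝ) * H (c 0) - g (c 0)) := by
      have := hφmono hT.1.le
      simp only [] at this ⊢
      linarith
    have := ENNReal.toReal_mono (ENNReal.ofReal_ne_top) hstep1
    rw [ENNReal.toReal_add (ENNReal.ofReal_ne_top) hfin,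
      ENNReal.toReal_ofReal (mul_nonneg K.coe_nonneg
        (by have := hHmono 0 T h01 hT01 hT.1.le; linarith)),
      ENNReal.toReal_ofReal hφ0T, hcid T hT01, hcid 0 h01] at this
    linarith
  -- the total dissipation is positive
  have hpos : 0 < ∫⁻ x in Set.Ioc (0:ℝ) 1, ENNReal.ofReal (‖v x‖^2) := by
    rw [pos_iff_ne_zero]
    intro hzero
    -- if zero, v = 0 a.e. on (0,1], so P is constant, contradicting non-stationarity
    have hvam : AEMeasurable (fun x => ENNReal.ofReal (‖v x‖^2))
        (volume.restrict (Set.Ioc (0:ℝ) 1)) :=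
      ENNReal.measurable_ofReal.comp_aemeasurable ((hvm.norm.aemeasurable).pow_const 2)
    have hv0 : ∀ᵐ x ∂(volume.restrict (Set.Ioc (0:ℝ) 1)), v x = 0 := by
      have := (lintegral_eq_zero_iff' hvam).1 hzero
      filter_upwards [this] with x hx
      have : ENNReal.ofReal (‖v x‖^2) = 0 := hx
      rw [ENNReal.ofReal_eq_zero] at this
      have h2 : ‖v x‖^2 = 0 := le_antisymm this (by positivity)
      have h3 : ‖v x‖ = 0 := by
        nlinarith [norm_nonneg (v x)]
      exact norm_eq_zero.1 h3
    have hPconst : ∀ t ∈ Set.Icc (0:ℝ) 1, P t = P 0 := by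
      intro t ht
      rw [habs t ht.1]
      have : (∫ s in (0:ℝ)..t, v s) = 0 := by
        rw [intervalIntegral.integral_of_le ht.1]
        refine integral_eq_zero_of_ae ?_
        exact ae_restrict_of_ae_restrict_of_subset (Set.Ioc_subset_Ioc_right ht.2) hv0
      rw [this, add_zero]
    have hrest : ∀ᵐ t ∂(volume.restrict (Set.Ioc (0:ℝ) 1)), -(v t) ∈ D (P t) :=
      ae_restrict_of_ae_restrict_of_subset Set.Ioc_subset_Ioi_self hincl
    have hmem : ∀ᵐ t ∂(volume.restrict (Set.Ioc (0:ℝ) 1)), t ∈ Set.Ioc (0:ℝ) 1 :=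
      ae_restrict_mem measurableSet_Ioc
    have hne : (volume.restrict (Set.Ioc (0:ℝ) 1)) ≠ 0 := by
      intro hcon
      rw [Measure.restrict_eq_zero] at hcon
      simp [Real.volume_Ioc] at hcon
    have : ∃ t, -(v t) ∈ D (P t) ∧ v t = 0 ∧ t ∈ Set.Ioc (0:ℝ) 1 := by
      have hNB : (ae (volume.restrict (Set.Ioc (0:ℝ) 1))).NeBot := ae_neBot.2 hne
      exact ((hrest.and (hv0.and hmem)).mono (fun t ht => ⟨ht.1, ht.2.1, ht.2.2⟩)).exists
    obtain ⟨t, h1, h2, h3⟩ := this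
    rw [h2, neg_zero, hPconst t ⟨h3.1.le, h3.2⟩] at h1
    exact hnonstat h1
  -- conclusion with T = 1
  obtain ⟨hkey1, hfin1⟩ := hkey 1 ⟨zero_lt_one, le_refl 1⟩
  have hIpos : 0 < (∫⁻ x in Set.Ioc (0:ℝ) 1, ENNReal.ofReal (‖v x‖^2)).toReal :=
    ENNReal.toReal_pos (pos_iff_ne_zero.1 hpos) hfin1
  have hg1 : g 1 < g 0 := by linarith
  have hle : ∀ t ∈ Set.Icc (0:ℝ) 1, g t ≤ g 0 := by
    intro t ht
    rcases eq_or_lt_of_le ht.1 with h | h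
    · rw [← h]
    · have := (hkey t ⟨h, ht.2⟩).1
      have h2 : 0 ≤ (∫⁻ x in Set.Ioc 0 t, ENNReal.ofReal (‖v x‖^2)).toReal :=
        ENNReal.toReal_nonneg
      linarith
  refine ⟨1, zero_lt_one, ?_, ?_⟩
  · refine lt_of_lt_of_le hg1 ?_
    refine le_csSup ⟨g 0, ?_⟩ ⟨0, ⟨le_refl 0, zero_le_one⟩, rfl⟩
    rintro y ⟨t, ht, rfl⟩
    exact hle t ht
  · refine csSup_le ⟨g 0, ⟨0, ⟨le_refl 0, zero_le_one⟩, rfl⟩⟩ ?_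
    rintro y ⟨t, ht, rfl⟩
    exact hle t ht
end
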